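/- arXiv:1907.12661 — 3 statements merged into one kernel-verified Lean document; each statement's English description precedes it below -/
import Mathlib

section
/- Let B and P be two perfect matchings on the same set of n vertices, n even, n ≥ 4. Then there exist at least (n−3)!! perfect matchings Q on this vertex set such that both edge-disjoint unions Q ∪ B and P ∪ Q are Hamiltonian cycles. -/
abbrev Edges (n : ℕ) : Type := Multiset (Sym2 (Fin n))

/-- Degree of a vertex in a loopless multigraph given by an edge multiset. -/
def edeg {n : ℕ} (E : Edges n) (v : Fin n) : ℕ :=
  Multiset.card (E.filter (fun e => v ∈ e))

/-- The multigraph has no loops. -/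
def Loopless {n : ℕ} (E : Edges n) : Prop := ∀ e ∈ E, ¬ e.IsDiag

/-- A perfect matching: a loopless 1-regular multigraph on all vertices. -/
def IsPM {n : ℕ} (E : Edges n) : Prop :=
  Loopless E ∧ ∀ v, edeg E v = 1

/-- Adjacency in the multigraph. -/
def EAdj {n : ℕ} (E : Edges n) (u v : Fin n) : Prop :=
  u ≠ v ∧ s(u, v) ∈ E

/-- A Hamiltonian cycle: a connected, loopless, 2-regular multigraph on all vertices. -/
def IsHam {n : ℕ} (E : Edges n) : Prop :=
  Loopless E ∧ (∀ v, edeg E v = 2) ∧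
    ∀ u v : Fin n, Relation.ReflTransGen (EAdj E) u v

/-- A 2-regular loopless multigraph (a disjoint union of cycles). -/
def TwoRegular {n : ℕ} (E : Edges n) : Prop :=
  Loopless E ∧ ∀ v, edeg E v = 2

/-- Every connected component (cycle) has an even number of vertices,
i.e. all cycles have even length. -/
def EvenCycles {n : ℕ} (E : Edges n) : Prop :=
  ∀ v : Fin n, Even (Set.ncard {u | Relation.ReflTransGen (EAdj E) v u})

/-- `C` is a compatible cycle for `G`: a Hamiltonian cycle such that the edge-disjoint
union `G ∪ C` decomposes into two edge-disjoint Hamiltonian cycles. -/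
def Compatible {n : ℕ} (G C : Edges n) : Prop :=
  IsHam C ∧ ∃ C₁ C₂ : Edges n, IsHam C₁ ∧ IsHam C₂ ∧ G + C = C₁ + C₂


namespace Aux

variable {n : ℕ}

def IsPMOn (s : Finset (Fin n)) (E : Edges n) : Prop :=
  Loopless E ∧ ∀ v, edeg E v = if v ∈ s then 1 else 0

def IsHamOn (s : Finset (Fin n)) (E : Edges n) : Prop :=
  Loopless E ∧ (∀ v, edeg E v = if v ∈ s then 2 else 0) ∧
    ∀ u ∈ s, ∀ v ∈ s, Relation.ReflTransGen (EAdj E) u v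

lemma edeg_add (E F : Edges n) (v : Fin n) : edeg (E + F) v = edeg E v + edeg F v := by
  simp [edeg, Multiset.filter_add]

lemma edeg_cons (e : Sym2 (Fin n)) (E : Edges n) (v : Fin n) :
    edeg (e ::ₘ E) v = (if v ∈ e then 1 else 0) + edeg E v := by
  simp only [edeg, Multiset.filter_cons]
  split <;> simp [Nat.add_comm]

lemma edeg_singleton (e : Sym2 (Fin n)) (v : Fin n) :
    edeg ({e} : Edges n) v = if v ∈ e then 1 else 0 := by
  have : ({e} : Edges n) = e ::ₘ 0 := rfl
  rw [this, edeg_cons]; simp [edeg]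

lemma edeg_pos_of_mem {E : Edges n} {e : Sym2 (Fin n)} {v : Fin n}
    (he : e ∈ E) (hv : v ∈ e) : 0 < edeg E v := by
  have : e ∈ E.filter (fun e => v ∈ e) := Multiset.mem_filter.mpr ⟨he, hv⟩
  exact Multiset.card_pos_iff_exists_mem.mpr ⟨e, this⟩

lemma two_mem_card {α : Type*} [DecidableEq α] {m : Multiset α} {a b : α}
    (ha : a ∈ m) (hb : b ∈ m) (hab : a ≠ b) : 2 ≤ Multiset.card m := by
  have hb' : b ∈ m.erase a := (Multiset.mem_erase_of_ne (Ne.symm hab)).mpr hb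
  have := Multiset.cons_erase ha
  rw [← this, Multiset.card_cons]
  have : 0 < Multiset.card (m.erase a) := Multiset.card_pos_iff_exists_mem.mpr ⟨b, hb'⟩
  omega

lemma two_erase {α : Type*} [DecidableEq α] {m : Multiset α} {a b : α}
    (ha : a ∈ m) (hb : b ∈ m) (hab : a ≠ b) :
    m = a ::ₘ b ::ₘ ((m.erase a).erase b) := by
  have hb' : b ∈ m.erase a := (Multiset.mem_erase_of_ne (Ne.symm hab)).mpr hb
  rw [Multiset.cons_erase hb', Multiset.cons_erase ha]

lemma add_singleton_erase {α : Type*} [DecidableEq α] (m : Multiset α) (a : α) :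
    (m + {a}).erase a = m := by
  have : m + ({a} : Multiset α) = a ::ₘ m := by
    rw [add_comm, Multiset.singleton_add]
  rw [this, Multiset.erase_cons_head]

/-- uniqueness of the matched partner -/
lemma pm_unique {s : Finset (Fin n)} {E : Edges n} (h : IsPMOn s E) {v a c : Fin n}
    (ha : s(v, a) ∈ E) (hc : s(v, c) ∈ E) : a = c := by
  by_contra hac
  have hne : s(v, a) ≠ s(v, c) := fun h' => hac (Sym2.congr_right.mp h')
  have h1 : s(v, a) ∈ E.filter (fun e => v ∈ e) :=
    Multiset.mem_filter.mpr ⟨ha, by simp⟩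
  have h2 : s(v, c) ∈ E.filter (fun e => v ∈ e) :=
    Multiset.mem_filter.mpr ⟨hc, by simp⟩
  have := two_mem_card h1 h2 hne
  have hdeg := h.2 v
  unfold edeg at hdeg
  split at hdeg <;> omega

lemma pm_partner {s : Finset (Fin n)} {E : Edges n} (h : IsPMOn s E) {v : Fin n}
    (hv : v ∈ s) : ∃ w, w ≠ v ∧ w ∈ s ∧ s(v, w) ∈ E := by
  have h1 : edeg E v = 1 := by rw [h.2 v, if_pos hv]
  unfold edeg at h1
  obtain ⟨e, he⟩ := Multiset.card_eq_one.mp h1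
  have hemem : e ∈ E.filter (fun e => v ∈ e) := he ▸ Multiset.mem_singleton_self e
  obtain ⟨heE, hve⟩ := Multiset.mem_filter.mp hemem
  refine ⟨Sym2.Mem.other hve, ?_, ?_, ?_⟩
  · intro hw
    have := Sym2.other_spec hve
    have hdiag : e.IsDiag := by rw [← this, hw]; exact Sym2.mk_isDiag_iff.mpr rfl
    exact h.1 e heE hdiag
  · have hmem : Sym2.Mem.other hve ∈ e := Sym2.other_mem hve
    have hpos := edeg_pos_of_mem heE hmem
    have h2 := h.2 (Sym2.Mem.other hve)
    by_cases hw : Sym2.Mem.other hve ∈ s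
    · exact hw
    · rw [if_neg hw] at h2; omega
  · rw [Sym2.other_spec hve]; exact heE

lemma pm_mem_of_edge {s : Finset (Fin n)} {E : Edges n} (h : IsPMOn s E)
    {e : Sym2 (Fin n)} {v : Fin n} (he : e ∈ E) (hv : v ∈ e) : v ∈ s := by
  have := edeg_pos_of_mem he hv
  have h2 := h.2 v
  by_cases hv' : v ∈ s
  · exact hv'
  · rw [if_neg hv'] at h2; omega


lemma sum_indicator_mem (e : Sym2 (Fin n)) (he : ¬ e.IsDiag) :
    (∑ v : Fin n, if v ∈ e then 1 else 0) = 2 := by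
  induction e using Sym2.ind with
  | _ a b =>
    have hab : a ≠ b := by simpa using he
    have : ∀ v : Fin n, (if v ∈ s(a,b) then (1:ℕ) else 0) = if v ∈ ({a, b} : Finset (Fin n)) then 1 else 0 := by
      intro v; simp [Sym2.mem_iff]
    rw [Finset.sum_congr rfl (fun v _ => this v)]
    rw [Finset.sum_ite_mem]
    simp [Finset.card_insert_of_notMem, hab]

lemma sum_edeg (E : Edges n) (hE : Loopless E) :
    (∑ v : Fin n, edeg E v) = 2 * Multiset.card E := by
  induction E using Multiset.induction_on with
  | empty => simp [edeg]
  | cons e E ih =>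
    have hE' : Loopless E := fun f hf => hE f (Multiset.mem_cons_of_mem hf)
    have he : ¬ e.IsDiag := hE e (Multiset.mem_cons_self e E)
    simp only [edeg_cons, Finset.sum_add_distrib, ih hE', Multiset.card_cons,
      sum_indicator_mem e he]
    ring

lemma pm_card {s : Finset (Fin n)} {E : Edges n} (h : IsPMOn s E) :
    2 * Multiset.card E = s.card := by
  rw [← sum_edeg E h.1]
  rw [Finset.sum_congr rfl (fun v _ => h.2 v)]
  rw [Finset.sum_ite_mem]
  simp

lemma finite_card_eq (N : ℕ) :
    {m : Multiset (Sym2 (Fin n)) | Multiset.card m = N}.Finite := by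
  apply Set.Finite.subset
    (Set.finite_range (fun f : Fin N → Sym2 (Fin n) => (List.ofFn f : Multiset (Sym2 (Fin n)))))
  intro m hm
  obtain ⟨l, rfl⟩ := Quotient.exists_rep m
  have hl : l.length = N := hm
  subst hl
  exact ⟨l.get, by simp⟩

lemma rtg_mono {E E' : Edges n}
    (h : ∀ a c : Fin n, EAdj E' a c → Relation.ReflTransGen (EAdj E) a c)
    {u v : Fin n} (huv : Relation.ReflTransGen (EAdj E') u v) :
    Relation.ReflTransGen (EAdj E) u v := by
  induction huv with
  | refl => exact Relation.ReflTransGen.refl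
  | @tail b c h1 h2 ih => exact ih.trans (h b c h2)

lemma eadj_symm (E : Edges n) : Symmetric (EAdj E) := by
  intro a c h
  exact ⟨h.1.symm, by rw [Sym2.eq_swap]; exact h.2⟩


lemma pm_extend {s : Finset (Fin n)} {Q' : Edges n} {x q : Fin n}
    (hx : x ∈ s) (hq : q ∈ s) (hxq : x ≠ q)
    (hQ' : IsPMOn (s \ {x, q}) Q') : IsPMOn s (Q' + {s(x, q)}) := by
  constructor
  · intro e he
    rcases Multiset.mem_add.mp he with h1 | h2
    · exact hQ'.1 e h1
    · have : e = s(x, q) := by simpa using h2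
      subst this
      simpa using hxq
  · intro w
    rw [edeg_add, edeg_singleton, hQ'.2 w]
    simp only [Sym2.mem_iff, Finset.mem_sdiff, Finset.mem_insert, Finset.mem_singleton]
    by_cases h1 : w = x <;> by_cases h2 : w = q <;> by_cases h5 : w ∈ s <;>
      simp_all <;> omega

lemma contract_pm {s : Finset (Fin n)} {B : Edges n} (hB : IsPMOn s B)
    {x b q w : Fin n} (hx : x ∈ s) (hq : q ∈ s) (hxq : x ≠ q)
    (hxb : s(x, b) ∈ B) (hqw : s(q, w) ∈ B) (hbq : b ≠ q) :
    b ≠ x ∧ w ≠ x ∧ w ≠ q ∧ b ≠ w ∧ b ∈ s ∧ w ∈ s ∧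
    IsPMOn (s \ {x, q}) ((B.erase s(x, b)).erase s(q, w) + {s(b, w)}) := by
  have hbx : b ≠ x := by
    intro h
    exact hB.1 _ hxb (Sym2.mk_isDiag_iff.mpr h.symm)
  have hwq : w ≠ q := by
    intro h
    exact hB.1 _ hqw (Sym2.mk_isDiag_iff.mpr h.symm)
  have hwx : w ≠ x := by
    rintro rfl
    have hx' : s(w, q) ∈ B := by rwa [Sym2.eq_swap] at hqw
    exact hbq (pm_unique hB hxb hx')
  have hbw : b ≠ w := by
    rintro rfl
    have h1 : s(b, x) ∈ B := by rwa [Sym2.eq_swap] at hxb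
    have h2 : s(b, q) ∈ B := by rwa [Sym2.eq_swap] at hqw
    exact hxq (pm_unique hB h1 h2)
  have hbs : b ∈ s := pm_mem_of_edge hB hxb (by simp)
  have hws : w ∈ s := pm_mem_of_edge hB hqw (by simp)
  have hne : s(x, b) ≠ s(q, w) := by
    intro h
    rcases Sym2.eq_iff.mp h with ⟨h1, h2⟩ | ⟨h1, h2⟩
    · exact hxq h1
    · exact hbq h2
  have hdec := two_erase hxb hqw hne
  refine ⟨hbx, hwx, hwq, hbw, hbs, hws, ?_, ?_⟩
  · intro e he
    rcases Multiset.mem_add.mp he with h1 | h2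
    · exact hB.1 e (Multiset.mem_of_mem_erase (Multiset.mem_of_mem_erase h1))
    · have : e = s(b, w) := by simpa using h2
      subst this
      simpa using hbw
  · intro z
    have h0 := hB.2 z
    rw [hdec, edeg_cons, edeg_cons] at h0
    rw [edeg_add, edeg_singleton]
    clear hdec
    simp only [Sym2.mem_iff, Finset.mem_sdiff, Finset.mem_insert, Finset.mem_singleton] at h0 ⊢
    by_cases h1 : z = x <;> by_cases h2 : z = q <;> by_cases h3 : z = b <;>
      by_cases h4 : z = w <;> by_cases h5 : z ∈ s <;>
      simp only [h1, h2, h3, h4, h5, hx, hq, hbs, hws, hbx, hbq, hbw, hwx, hwq, hxq,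
        Ne.symm hbx, Ne.symm hbq, Ne.symm hbw, Ne.symm hwx, Ne.symm hwq, Ne.symm hxq,
        if_true, if_false, not_true, not_false_iff, or_true, true_or, false_or, or_false,
        and_true, true_and, and_false, false_and, not_false_eq_true, ite_true, ite_false,
        iff_true, iff_false] at h0 ⊢ <;> omega

lemma subdivide {s : Finset (Fin n)} {E' : Edges n} {x q u v : Fin n}
    (hx : x ∈ s) (hq : q ∈ s) (hxq : x ≠ q)
    (hus : u ∈ s) (hvs : v ∈ s) (hux : u ≠ x) (huq : u ≠ q) (hvx : v ≠ x) (hvq : v ≠ q)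
    (huv : u ≠ v)
    (hE' : IsHamOn (s \ {x, q}) E') (huvE : s(u, v) ∈ E') :
    IsHamOn s (E'.erase s(u, v) + {s(u, x), s(x, q), s(q, v)}) := by
  set E := E'.erase s(u, v) + {s(u, x), s(x, q), s(q, v)} with hE
  have hdecomp : E' = s(u, v) ::ₘ E'.erase s(u, v) := (Multiset.cons_erase huvE).symm
  have hlit : ({s(u, x), s(x, q), s(q, v)} : Edges n) = s(u, x) ::ₘ s(x, q) ::ₘ {s(q, v)} := rfl
  have hmem1 : s(u, x) ∈ E := Multiset.mem_add.mpr (Or.inr (by simp))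
  have hmem2 : s(x, q) ∈ E := Multiset.mem_add.mpr (Or.inr (by simp))
  have hmem3 : s(q, v) ∈ E := Multiset.mem_add.mpr (Or.inr (by simp))
  refine ⟨?_, ?_, ?_⟩
  · intro e he
    rcases Multiset.mem_add.mp he with h1 | h2
    · exact hE'.1 e (Multiset.mem_of_mem_erase h1)
    · rcases (by simpa using h2 : e = s(u, x) ∨ e = s(x, q) ∨ e = s(q, v)) with rfl | rfl | rfl
      · simpa using hux
      · simpa using hxq
      · simpa using (Ne.symm hvq)
  · intro w
    have h0 := hE'.2.1 w
    rw [hdecomp, edeg_cons] at h0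
    rw [hE, edeg_add, hlit, edeg_cons, edeg_cons, edeg_singleton]
    clear hdecomp hE hlit hmem1 hmem2 hmem3
    simp only [Sym2.mem_iff, Finset.mem_sdiff, Finset.mem_insert, Finset.mem_singleton] at h0 ⊢
    by_cases h1 : w = x <;> by_cases h2 : w = q <;> by_cases h3 : w = u <;>
      by_cases h4 : w = v <;> by_cases h5 : w ∈ s <;>
      simp only [h1, h2, h3, h4, h5, hx, hq, hus, hvs, hux, huq, hvx, hvq, huv, hxq,
        Ne.symm hux, Ne.symm huq, Ne.symm hvx, Ne.symm hvq, Ne.symm huv, Ne.symm hxq,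
        if_true, if_false, not_true, not_false_iff, or_true, true_or, false_or, or_false,
        and_true, true_and, and_false, false_and, not_false_eq_true, ite_true, ite_false,
        iff_true, iff_false] at h0 ⊢ <;> omega
  · have step : ∀ a c : Fin n, EAdj E' a c → Relation.ReflTransGen (EAdj E) a c := by
      rintro a c ⟨hac, hmem⟩
      by_cases h : s(a, c) = s(u, v)
      · have p1 : Relation.ReflTransGen (EAdj E) u v :=
          ((Relation.ReflTransGen.single ⟨hux, hmem1⟩).tail ⟨hxq, hmem2⟩).tail
            ⟨Ne.symm hvq, hmem3⟩
        have p2 : Relation.ReflTransGen (EAdj E) v u :=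
          (by haveI : Std.Symm (EAdj E) := ⟨fun _ _ h => eadj_symm E h⟩; exact Relation.ReflTransGen.symmetric.symm _ _ p1)
        rcases Sym2.eq_iff.mp h with ⟨rfl, rfl⟩ | ⟨rfl, rfl⟩
        · exact p1
        · exact p2
      · have hmem' : s(a, c) ∈ E'.erase s(u, v) := (Multiset.mem_erase_of_ne h).mpr hmem
        exact Relation.ReflTransGen.single ⟨hac, Multiset.mem_add.mpr (Or.inl hmem')⟩
    have hu' : u ∈ s \ {x, q} := by simp [Finset.mem_sdiff, hus, hux, huq]
    have reach : ∀ w ∈ s, Relation.ReflTransGen (EAdj E) w u := by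
      intro w hw
      by_cases hwx : w = x
      · subst hwx
        exact Relation.ReflTransGen.single
          ⟨Ne.symm hux, by rw [Sym2.eq_swap]; exact hmem1⟩
      · by_cases hwq : w = q
        · subst hwq
          exact (Relation.ReflTransGen.single
              ⟨Ne.symm hxq, by rw [Sym2.eq_swap]; exact hmem2⟩).tail
            ⟨Ne.symm hux, by rw [Sym2.eq_swap]; exact hmem1⟩
        · have hw' : w ∈ s \ {x, q} := by simp [Finset.mem_sdiff, hw, hwx, hwq]
          exact rtg_mono step (hE'.2.2 w hw' u hu')
    intro w1 hw1 w2 hw2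
    exact (reach w1 hw1).trans
      ((by haveI : Std.Symm (EAdj E) := ⟨fun _ _ h => eadj_symm E h⟩; exact Relation.ReflTransGen.symmetric.symm _ _ (reach w2 hw2)))


lemma finiteT {s : Finset (Fin n)} {k : ℕ} (hs : s.card = k) (B P : Edges n) :
    {Q : Edges n | IsPMOn s Q ∧ IsHamOn s (Q + B) ∧ IsHamOn s (P + Q)}.Finite := by
  apply Set.Finite.subset (finite_card_eq (k / 2))
  intro Q hQ
  have h := pm_card hQ.1
  simp only [Set.mem_setOf_eq]
  omega

lemma main (k : ℕ) : ∀ (s : Finset (Fin n)) (B P : Edges n),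
    s.card = k → Even k → 2 ≤ k → IsPMOn s B → IsPMOn s P →
    Nat.doubleFactorial (k - 3) ≤
      Set.ncard {Q : Edges n | IsPMOn s Q ∧ IsHamOn s (Q + B) ∧ IsHamOn s (P + Q)} := by
  induction k using Nat.strong_induction_on with
  | _ k IH =>
  intro s B P hcard hek h2 hB hP
  have hTfin := finiteT hcard B P
  obtain ⟨c, hc⟩ := hek
  rcases (by omega : k = 2 ∨ 4 ≤ k) with rfl | hk4
  · -- base case k = 2
    obtain ⟨a, c', hac, hs⟩ := Finset.card_eq_two.mp hcard
    have ha : a ∈ s := by rw [hs]; simp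
    have hc' : c' ∈ s := by rw [hs]; simp
    have hmatch : ∀ E : Edges n, IsPMOn s E → E = {s(a, c')} := by
      intro E hE
      obtain ⟨w, hw1, hw2, hw3⟩ := pm_partner hE ha
      have hwc : w = c' := by
        rw [hs] at hw2
        rcases Finset.mem_insert.mp hw2 with h | h
        · exact absurd h hw1
        · simpa using h
      subst hwc
      have hcard1 : Multiset.card E = 1 := by have := pm_card hE; omega
      obtain ⟨e, he⟩ := Multiset.card_eq_one.mp hcard1
      rw [he] at hw3 ⊢
      rw [Multiset.mem_singleton.mp hw3]
    have hBe := hmatch B hB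
    have hPe := hmatch P hP
    have hQpm : IsPMOn s ({s(a, c')} : Edges n) := by
      constructor
      · intro e he
        rw [Multiset.mem_singleton.mp he]
        simpa using hac
      · intro v
        rw [edeg_singleton, hs]
        simp [Sym2.mem_iff]
    have hQham : IsHamOn s (({s(a, c')} : Edges n) + {s(a, c')}) := by
      refine ⟨?_, ?_, ?_⟩
      · intro e he
        rcases Multiset.mem_add.mp he with h | h <;>
          · rw [Multiset.mem_singleton.mp h]; simpa using hac
      · intro v
        rw [edeg_add, edeg_singleton, hs]
        simp only [Sym2.mem_iff, Finset.mem_insert, Finset.mem_singleton]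
        split <;> simp
      · have hadj : EAdj (({s(a, c')} : Edges n) + {s(a, c')}) a c' :=
          ⟨hac, Multiset.mem_add.mpr (Or.inl (by simp))⟩
        intro u hu v hv
        rw [hs, Finset.mem_insert, Finset.mem_singleton] at hu hv
        rcases hu with h1 | h1 <;> rcases hv with h2 | h2 <;> rw [h1, h2] <;>
          first
            | exact Relation.ReflTransGen.refl
            | exact Relation.ReflTransGen.single hadj
            | exact Relation.ReflTransGen.single (eadj_symm _ hadj)
    have hQT : ({s(a, c')} : Edges n) ∈
        {Q : Edges n | IsPMOn s Q ∧ IsHamOn s (Q + B) ∧ IsHamOn s (P + Q)} := by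
      refine ⟨hQpm, ?_, ?_⟩
      · rw [hBe]; exact hQham
      · rw [hPe]; exact hQham
    have hpos := (Set.ncard_pos hTfin).mpr ⟨_, hQT⟩
    have h1 : Nat.doubleFactorial (2 - 3) = 1 := rfl
    rw [h1]
    exact hpos
  · -- inductive step, k ≥ 4
    have hsne : s.Nonempty := by rw [← Finset.card_pos, hcard]; omega
    obtain ⟨x, hx⟩ := hsne
    obtain ⟨b, hbx, hbs, hxbB⟩ := pm_partner hB hx
    obtain ⟨p, hpx, hps, hxpP⟩ := pm_partner hP hx
    set T := {Q : Edges n | IsPMOn s Q ∧ IsHamOn s (Q + B) ∧ IsHamOn s (P + Q)} with hTdef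
    set S := s \ {x, b, p} with hSdef
    have hScard : k - 3 ≤ S.card := by
      have h3 : ({x, b, p} : Finset (Fin n)).card ≤ 3 := by
        calc ({x, b, p} : Finset (Fin n)).card ≤ ({b, p} : Finset (Fin n)).card + 1 :=
              Finset.card_insert_le _ _
          _ ≤ (({p} : Finset (Fin n)).card + 1) + 1 :=
              Nat.add_le_add_right (Finset.card_insert_le _ _) 1
          _ = 3 := by simp
      have hle := Finset.le_card_sdiff ({x, b, p} : Finset (Fin n)) s
      rw [← hSdef] at hle
      omega
    set F : Fin n → Finset (Edges n) := fun q => hTfin.toFinset.filter (fun E => s(x, q) ∈ E)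
      with hFdef
    have hdisj : ∀ q1 ∈ S, ∀ q2 ∈ S, q1 ≠ q2 → Disjoint (F q1) (F q2) := by
      intro q1 _ q2 _ hq12
      rw [Finset.disjoint_left]
      intro Q hQ1 hQ2
      simp only [hFdef, Finset.mem_filter, Set.Finite.mem_toFinset] at hQ1 hQ2
      have hQpm : IsPMOn s Q := hQ1.1.1
      have h1 : s(x, q1) ∈ Q.filter (fun e => x ∈ e) :=
        Multiset.mem_filter.mpr ⟨hQ1.2, by simp⟩
      have h2 : s(x, q2) ∈ Q.filter (fun e => x ∈ e) :=
        Multiset.mem_filter.mpr ⟨hQ2.2, by simp⟩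
      have hne : s(x, q1) ≠ s(x, q2) := fun h => hq12 (Sym2.congr_right.mp h)
      have hge := two_mem_card h1 h2 hne
      have hdeg := hQpm.2 x
      rw [if_pos hx] at hdeg
      unfold edeg at hdeg
      omega
    have key : ∀ q ∈ S, Nat.doubleFactorial (k - 5) ≤ (F q).card := by
      intro q hqS
      rw [hSdef, Finset.mem_sdiff] at hqS
      obtain ⟨hqs, hqn⟩ := hqS
      simp only [Finset.mem_insert, Finset.mem_singleton, not_or] at hqn
      obtain ⟨hqx, hqb, hqp⟩ := hqn
      obtain ⟨bq, hbq1, hbqs0, hqbqB⟩ := pm_partner hB hqs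
      obtain ⟨pq, hpq1, hpqs0, hqpqP⟩ := pm_partner hP hqs
      have hxq : x ≠ q := fun h => hqx h.symm
      obtain ⟨hbxx, hbqx, hbqq, hbbq, hbs', hbqs', hB'⟩ :=
        contract_pm hB hx hqs hxq hxbB hqbqB (fun h => hqb h.symm)
      obtain ⟨hpxx, hpqx, hpqq, hppq, hps', hpqs', hP'⟩ :=
        contract_pm hP hx hqs hxq hxpP hqpqP (fun h => hqp h.symm)
      set s' := s \ ({x, q} : Finset (Fin n)) with hs'def
      set B' := (B.erase s(x, b)).erase s(q, bq) + ({s(b, bq)} : Edges n) with hB'def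
      set P' := (P.erase s(x, p)).erase s(q, pq) + ({s(p, pq)} : Edges n) with hP'def
      have hs'card : s'.card = k - 2 := by
        rw [hs'def, Finset.card_sdiff_of_subset]
        · rw [hcard]
          congr 1
          rw [Finset.card_insert_of_notMem (by simpa using hxq), Finset.card_singleton]
        · intro z hz
          rcases Finset.mem_insert.mp hz with rfl | hz
          · exact hx
          · rw [Finset.mem_singleton.mp hz]; exact hqs
      have IH' := IH (k - 2) (by omega) s' B' P' hs'card ⟨c - 1, by omega⟩ (by omega) hB' hP'
      rw [show k - 2 - 3 = k - 5 by omega] at IH'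
      set T' := {Q' : Edges n | IsPMOn s' Q' ∧ IsHamOn s' (Q' + B') ∧ IsHamOn s' (P' + Q')}
        with hT'def
      -- the extension map lands in F q
      have himg : (fun Q' => Q' + ({s(x, q)} : Edges n)) '' T' ⊆ ↑(F q) := by
        rintro Q ⟨Q', hQ', rfl⟩
        obtain ⟨hQ'pm, hQ'B, hQ'P⟩ := hQ'
        have hBne : s(x, b) ≠ s(q, bq) := by
          intro h
          rcases Sym2.eq_iff.mp h with ⟨h1, h2⟩ | ⟨h1, h2⟩
          · exact hxq h1
          · exact hqb h2.symm
        have hPne : s(x, p) ≠ s(q, pq) := by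
          intro h
          rcases Sym2.eq_iff.mp h with ⟨h1, h2⟩ | ⟨h1, h2⟩
          · exact hxq h1
          · exact hqp h2.symm
        have hmemT : Q' + ({s(x, q)} : Edges n) ∈ T := by
          refine ⟨pm_extend hx hqs hxq hQ'pm, ?_, ?_⟩
          · -- IsHamOn s (Q' + {s(x,q)} + B)
            have hmemE' : s(b, bq) ∈ Q' + B' := by
              refine Multiset.mem_add.mpr (Or.inr ?_)
              rw [hB'def]
              exact Multiset.mem_add.mpr (Or.inr (by simp))
            have hsub := subdivide hx hqs hxq hbs' hbqs' hbxx (fun h => hqb h.symm)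
              hbqx hbqq hbbq hQ'B hmemE'
            have heq : (Q' + B').erase s(b, bq) + ({s(b, x), s(x, q), s(q, bq)} : Edges n)
                = Q' + ({s(x, q)} : Edges n) + B := by
              have h1 : (Q' + B').erase s(b, bq)
                  = Q' + (B.erase s(x, b)).erase s(q, bq) := by
                rw [hB'def, ← add_assoc, add_singleton_erase]
              rw [h1]
              conv_rhs => rw [two_erase hxbB hqbqB hBne]
              rw [show s(b, x) = s(x, b) from Sym2.eq_swap]
              have hl : ({s(x, b), s(x, q), s(q, bq)} : Edges n)
                  = {s(x, b)} + ({s(x, q)} + {s(q, bq)}) := rfl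
              rw [hl]
              have hr : (s(x, b) ::ₘ s(q, bq) ::ₘ (B.erase s(x, b)).erase s(q, bq))
                  = {s(x, b)} + ({s(q, bq)} + (B.erase s(x, b)).erase s(q, bq)) := by
                rw [Multiset.singleton_add, Multiset.singleton_add]
              rw [hr]
              abel
            rw [heq] at hsub
            exact hsub
          · -- IsHamOn s (P + (Q' + {s(x,q)}))
            have hmemE' : s(p, pq) ∈ P' + Q' := by
              refine Multiset.mem_add.mpr (Or.inl ?_)
              rw [hP'def]
              exact Multiset.mem_add.mpr (Or.inr (by simp))
            have hsub := subdivide hx hqs hxq hps' hpqs' hpxx (fun h => hqp h.symm)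
              hpqx hpqq hppq hQ'P hmemE'
            have heq : (P' + Q').erase s(p, pq) + ({s(p, x), s(x, q), s(q, pq)} : Edges n)
                = P + (Q' + ({s(x, q)} : Edges n)) := by
              have h1 : (P' + Q').erase s(p, pq)
                  = (P.erase s(x, p)).erase s(q, pq) + Q' := by
                rw [hP'def, add_right_comm, add_singleton_erase]
              rw [h1]
              conv_rhs => rw [two_erase hxpP hqpqP hPne]
              rw [show s(p, x) = s(x, p) from Sym2.eq_swap]
              have hl : ({s(x, p), s(x, q), s(q, pq)} : Edges n)
                  = {s(x, p)} + ({s(x, q)} + {s(q, pq)}) := rfl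
              rw [hl]
              have hr : (s(x, p) ::ₘ s(q, pq) ::ₘ (P.erase s(x, p)).erase s(q, pq))
                  = {s(x, p)} + ({s(q, pq)} + (P.erase s(x, p)).erase s(q, pq)) := by
                rw [Multiset.singleton_add, Multiset.singleton_add]
              rw [hr]
              abel
            rw [heq] at hsub
            exact hsub
        simp only [hFdef, Finset.coe_filter, Set.mem_setOf_eq, Set.Finite.mem_toFinset]
        exact ⟨hmemT, Multiset.mem_add.mpr (Or.inr (by simp))⟩
      calc Nat.doubleFactorial (k - 5) ≤ Set.ncard T' := IH'
        _ = Set.ncard ((fun Q' => Q' + ({s(x, q)} : Edges n)) '' T') :=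
            (Set.ncard_image_of_injective _ (add_left_injective _)).symm
        _ ≤ (F q).card := by
            rw [← Set.ncard_coe_finset (F q)]
            exact Set.ncard_le_ncard himg (Finset.finite_toSet _)
    -- summation
    have hsum : S.card * Nat.doubleFactorial (k - 5) ≤ ∑ q ∈ S, (F q).card := by
      calc S.card * Nat.doubleFactorial (k - 5)
          = ∑ _q ∈ S, Nat.doubleFactorial (k - 5) := by rw [Finset.sum_const, smul_eq_mul]
        _ ≤ ∑ q ∈ S, (F q).card := Finset.sum_le_sum key
    have hbiU : ∑ q ∈ S, (F q).card = (S.biUnion F).card := (Finset.card_biUnion hdisj).symm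
    have hsubT : S.biUnion F ⊆ hTfin.toFinset := by
      intro Q hQ
      obtain ⟨q, _, hq⟩ := Finset.mem_biUnion.mp hQ
      exact Finset.mem_of_mem_filter _ hq
    have hfinal : (S.biUnion F).card ≤ Set.ncard T :=
      le_trans (Finset.card_le_card hsubT)
        (le_of_eq (Set.ncard_eq_toFinset_card T hTfin).symm)
    have hdf : Nat.doubleFactorial (k - 3) = (k - 3) * Nat.doubleFactorial (k - 5) := by
      rcases (by omega : k = 4 ∨ 5 ≤ k) with rfl | h5
      · rfl
      · rw [show k - 3 = (k - 5) + 2 by omega, Nat.doubleFactorial_add_two]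
    calc Nat.doubleFactorial (k - 3) = (k - 3) * Nat.doubleFactorial (k - 5) := hdf
      _ ≤ S.card * Nat.doubleFactorial (k - 5) := Nat.mul_le_mul_right _ hScard
      _ ≤ ∑ q ∈ S, (F q).card := hsum
      _ = (S.biUnion F).card := hbiU
      _ ≤ Set.ncard T := hfinal

end Aux

open Nat in
theorem lower_bound_common_completions (n : ℕ) (hn : 4 ≤ n) (hne : Even n)
    (B P : Edges n) (hB : IsPM B) (hP : IsPM P) :
    Nat.doubleFactorial (n - 3) ≤
      Set.ncard {Q : Edges n | IsPM Q ∧ IsHam (Q + B) ∧ IsHam (P + Q)} := by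
  have hpm : ∀ E : Edges n, IsPM E ↔ Aux.IsPMOn Finset.univ E := by
    intro E
    unfold IsPM Aux.IsPMOn
    simp
  have hham : ∀ E : Edges n, IsHam E ↔ Aux.IsHamOn Finset.univ E := by
    intro E
    unfold IsHam Aux.IsHamOn
    simp
  have hset : {Q : Edges n | IsPM Q ∧ IsHam (Q + B) ∧ IsHam (P + Q)} =
      {Q : Edges n | Aux.IsPMOn Finset.univ Q ∧ Aux.IsHamOn Finset.univ (Q + B) ∧
        Aux.IsHamOn Finset.univ (P + Q)} := by
    ext Q
    simp only [Set.mem_setOf_eq, hpm, hham]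
  rw [hset]
  exact Aux.main n Finset.univ B P (by simp) (by simpa using hne) (by omega)
    ((hpm B).mp hB) ((hpm P).mp hP)
end

section
/- Let G be a 2-regular loopless multigraph on n vertices all of whose cycles have even length (n even, n ≥ 4). Then there exist at least (n−2)!/2 Hamiltonian cycles C on the vertex set of G such that the 4-regular multigraph G ∪ C admits a Hamiltonian decomposition, i.e., G ∪ C = C₁ ∪ C₂ with C₁, C₂ Hamiltonian cycles. -/
def PMOn {n : ℕ} (S : Finset (Fin n)) (E : Edges n) : Prop :=
  Loopless E ∧ (∀ v ∈ S, edeg E v = 1) ∧ ∀ v (_ : v ∉ S), edeg E v = 0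

def HamOn {n : ℕ} (S : Finset (Fin n)) (E : Edges n) : Prop :=
  Loopless E ∧ (∀ v ∈ S, edeg E v = 2) ∧ (∀ v (_ : v ∉ S), edeg E v = 0) ∧
    ∀ u ∈ S, ∀ v ∈ S, Relation.ReflTransGen (EAdj E) u v

abbrev Reach {n : ℕ} (E : Edges n) (u v : Fin n) := Relation.ReflTransGen (EAdj E) u v

variable {n : ℕ}

lemma mem_supp_of_mem_edge {E : Edges n} {e : Sym2 (Fin n)} {v : Fin n}
    (he : e ∈ E) (hv : v ∈ e) : edeg E v ≠ 0 := by
  have : e ∈ E.filter (fun e => v ∈ e) := Multiset.mem_filter.2 ⟨he, hv⟩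
  simp only [edeg, ne_eq, Multiset.card_eq_zero]
  intro h; rw [h] at this; simp at this

lemma edeg_add (E F : Edges n) (v : Fin n) : edeg (E + F) v = edeg E v + edeg F v := by
  simp [edeg, Multiset.filter_add]

lemma edeg_cons (e : Sym2 (Fin n)) (E : Edges n) (v : Fin n) :
    edeg (e ::ₘ E) v = (if v ∈ e then 1 else 0) + edeg E v := by
  by_cases h : v ∈ e <;> simp [edeg, Multiset.filter_cons, h] <;> omega

lemma edeg_le_of_le {E F : Edges n} (h : E ≤ F) (v : Fin n) : edeg E v ≤ edeg F v :=
  Multiset.card_le_card (Multiset.filter_le_filter _ h)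

lemma loopless_of_le {E F : Edges n} (h : E ≤ F) (hF : Loopless F) : Loopless E :=
  fun e he => hF e (Multiset.mem_of_le h he)

lemma reach_mono {E F : Edges n} (h : E ≤ F) {u v : Fin n} (hr : Reach E u v) :
    Reach F u v := by
  induction hr with
  | refl => exact Relation.ReflTransGen.refl
  | tail _ hadj ih => exact ih.tail ⟨hadj.1, Multiset.mem_of_le h hadj.2⟩

/-- Peel an alternating path starting at a degree-1 vertex x, ending at the other
degree-1 vertex y. -/
lemma walk_peel (N : ℕ) : ∀ (G : Edges n), Multiset.card G ≤ N → Loopless G →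
    ∀ x y : Fin n, x ≠ y → edeg G x = 1 → edeg G y = 1 →
    (∀ v, v ≠ x → v ≠ y → edeg G v = 0 ∨ edeg G v = 2) →
    ∃ A B G₂ : Edges n,
      G = A + B + G₂ ∧ Loopless A ∧ Loopless B ∧
      (∀ v, edeg A v ≤ 1) ∧ (∀ v, edeg B v ≤ 1) ∧
      edeg A x = 1 ∧ edeg B x = 0 ∧
      (∀ v, v ≠ x → v ≠ y → edeg A v = edeg B v) ∧
      edeg G₂ x = 0 ∧ edeg G₂ y = 0 ∧ (∀ v, edeg G₂ v = 0 ∨ edeg G₂ v = 2) ∧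
      (∀ v, edeg (A + B) v ≠ 0 → Reach (A + B) x v) := by
  induction N with
  | zero =>
    intro G hcard _ x y _ hx _ _
    interval_cases h : Multiset.card G
    · exfalso; rw [Multiset.card_eq_zero] at h; subst h; simp [edeg] at hx
  | succ N ih =>
    intro G hcard hloop x y hxy hx hy hdeg
    -- find the edge at x
    have hne : ∃ e ∈ G, x ∈ e := by
      by_contra hc
      push_neg at hc
      have : G.filter (fun e => x ∈ e) = 0 := Multiset.filter_eq_nil.2 hc
      simp [edeg, this] at hx
    obtain ⟨e, heG, hxe⟩ := hne
    -- write e = s(x,z)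
    obtain ⟨z, rfl⟩ : ∃ z, e = s(x, z) := by
      induction e with
      | h a b =>
        rcases Sym2.mem_iff.1 hxe with rfl | rfl
        · exact ⟨b, rfl⟩
        · exact ⟨a, Sym2.eq_swap.symm⟩
    have hzx : z ≠ x := by
      intro hc; subst hc
      exact hloop _ heG (by simp [Sym2.isDiag_iff_proj_eq])
    set G' := G.erase s(x,z) with hG'
    have hGsplit : G = s(x,z) ::ₘ G' := (Multiset.cons_erase heG).symm
    have hcard' : Multiset.card G' ≤ N := by
      have := congrArg Multiset.card hGsplit
      simp at this; omega
    have hloop' : Loopless G' := loopless_of_le (Multiset.erase_le _ _) hloop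
    have hdegG : ∀ v, edeg G v = (if v ∈ s(x,z) then 1 else 0) + edeg G' v := by
      intro v; conv_lhs => rw [hGsplit]
      rw [edeg_cons]
    have hdegG'x : edeg G' x = 0 := by have := hdegG x; simp at this; omega
    by_cases hzy : z = y
    · -- base: single edge x-y
      subst hzy
      refine ⟨{s(x,z)}, 0, G', ?_, ?_, ?_, ?_, ?_, ?_, ?_, ?_, ?_, ?_, ?_, ?_⟩
      · rw [hGsplit]; simp [Multiset.singleton_add]
      · intro f hf; rw [Multiset.mem_singleton] at hf; subst hf
        simp [Sym2.isDiag_iff_proj_eq]; exact fun hc => hzx hc.symm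
      · intro f hf; simp at hf
      · intro v; rw [show ({s(x,z)} : Edges n) = s(x,z) ::ₘ 0 from rfl, edeg_cons]
        split <;> simp [edeg]
      · intro v; simp [edeg]
      · rw [show ({s(x,z)} : Edges n) = s(x,z) ::ₘ 0 from rfl, edeg_cons]; simp [edeg]
      · simp [edeg]
      · intro v hvx hvy
        rw [show ({s(x,z)} : Edges n) = s(x,z) ::ₘ 0 from rfl, edeg_cons]
        simp [edeg, Sym2.mem_iff, hvx, hvy]
      · exact hdegG'x
      · have := hdegG z; simp at this; omega
      · intro v
        by_cases hvx : v = x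
        · subst hvx; left; exact hdegG'x
        · by_cases hvy : v = z
          · subst hvy; left; have := hdegG v; simp at this; omega
          · have := hdegG v; simp [Sym2.mem_iff, hvx, hvy] at this
            rcases hdeg v hvx hvy with h | h <;> omega
      · intro v hv
        rw [show ({s(x,z)} : Edges n) + 0 = s(x,z) ::ₘ 0 from rfl, edeg_cons] at hv
        by_cases hvx : v = x
        · subst hvx; exact Relation.ReflTransGen.refl
        · have hvz : v = z := by
            by_contra hvz
            simp [edeg, Sym2.mem_iff, hvx, hvz] at hv
          subst hvz
          exact Relation.ReflTransGen.single ⟨hxy, by simp⟩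
    · -- recursive case
      have hzdeg2 : edeg G z = 2 := by
        rcases hdeg z hzx hzy with h | h
        · exfalso; exact (mem_supp_of_mem_edge heG (by simp)) h
        · exact h
      have hdegG'z : edeg G' z = 1 := by have := hdegG z; simp at this; omega
      have hdegG'y : edeg G' y = 1 := by
        have := hdegG y; simp [Sym2.mem_iff, hxy.symm, Ne.symm hzy] at this
        omega
      have hdeg' : ∀ v, v ≠ z → v ≠ y → edeg G' v = 0 ∨ edeg G' v = 2 := by
        intro v hvz hvy
        by_cases hvx : v = x
        · subst hvx; left; exact hdegG'x
        · have := hdegG v; simp [Sym2.mem_iff, hvx, hvz] at this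
          rcases hdeg v hvx hvy with h | h <;> omega
      obtain ⟨A', B', G₂, hsplit, hlA', hlB', hA'le, hB'le, hA'z, hB'z, hmatch, hG₂z, hG₂y, hG₂deg, hreach⟩ :=
        ih G' hcard' hloop' z y hzy hdegG'z hdegG'y hdeg'
      have hB'x : edeg B' x = 0 := by
        have : edeg B' x ≤ edeg G' x := by
          rw [hsplit]; rw [edeg_add, edeg_add]; omega
        omega
      have hA'x : edeg A' x = 0 := by
        have : edeg A' x ≤ edeg G' x := by
          rw [hsplit]; rw [edeg_add, edeg_add]; omega
        omega
      have hG₂x : edeg G₂ x = 0 := by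
        have : edeg G₂ x ≤ edeg G' x := by
          rw [hsplit]; rw [edeg_add, edeg_add]; omega
        omega
      refine ⟨s(x,z) ::ₘ B', A', G₂, ?_, ?_, hlA', ?_, hA'le, ?_, ?_, ?_, hG₂x, hG₂y, hG₂deg, ?_⟩
      · rw [hGsplit, hsplit]
        rw [Multiset.cons_add]
        congr 1
        rw [Multiset.cons_add]
        abel_nf
      · intro f hf
        rcases Multiset.mem_cons.1 hf with rfl | hf
        · simp [Sym2.isDiag_iff_proj_eq]; exact fun hc => hzx hc.symm
        · exact hlB' f hf
      · intro v
        rw [edeg_cons]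
        by_cases hvx : v = x
        · subst hvx; simp [hB'x]
        · by_cases hvz : v = z
          · subst hvz; simp [hB'z]
          · simp [Sym2.mem_iff, hvx, hvz]; exact hB'le v
      · rw [edeg_cons]; simp [hB'x]
      · exact hA'x
      · intro v hvx hvy
        rw [edeg_cons]
        by_cases hvz : v = z
        · subst hvz; simp [hB'z, hA'z]
        · simp [Sym2.mem_iff, hvx, hvz]
          exact (hmatch v hvz hvy).symm
      · intro v hv
        have hle : A' + B' ≤ (s(x,z) ::ₘ B') + A' := by
          rw [Multiset.cons_add]
          calc A' + B' = B' + A' := add_comm _ _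
          _ ≤ s(x,z) ::ₘ (B' + A') := (Multiset.le_cons_self _ _)
        have hstep : Reach ((s(x,z) ::ₘ B') + A') x z :=
          Relation.ReflTransGen.single ⟨fun hc => hzx hc.symm, by rw [Multiset.cons_add]; exact Multiset.mem_cons_self _ _⟩
        rw [edeg_add, edeg_cons] at hv
        by_cases hvmem : v ∈ s(x,z)
        · rcases Sym2.mem_iff.1 hvmem with rfl | rfl
          · exact Relation.ReflTransGen.refl
          · exact hstep
        · simp [hvmem] at hv
          have : edeg (A' + B') v ≠ 0 := by rw [edeg_add]; omega
          exact hstep.trans (reach_mono hle (hreach v this))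

lemma finite_card_le (k : ℕ) : {N : Edges n | Multiset.card N ≤ k}.Finite := by
  induction k with
  | zero =>
    have : {N : Edges n | Multiset.card N ≤ 0} ⊆ {0} := by
      intro N hN; simp only [Set.mem_setOf_eq, Nat.le_zero] at hN
      simp [Multiset.card_eq_zero.1 hN]
    exact Set.Finite.subset (Set.finite_singleton _) this
  | succ k ih =>
    have : {N : Edges n | Multiset.card N ≤ k + 1} ⊆
        {N | Multiset.card N ≤ k} ∪ (Set.range (fun s : Sym (Sym2 (Fin n)) (k+1) => (s : Multiset (Sym2 (Fin n))))) := by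
      intro N hN
      simp only [Set.mem_setOf_eq] at hN
      rcases Nat.lt_or_ge (Multiset.card N) (k+1) with h | h
      · left; simpa using Nat.lt_succ_iff.1 h
      · right; exact ⟨⟨N, le_antisymm hN h⟩, rfl⟩
    exact Set.Finite.subset (ih.union (Set.finite_range _)) this


section partner
-- partner machinery for PMs
lemma filter_eq_single {M : Edges n} {v : Fin n} (h : edeg M v = 1) :
    ∃ e, M.filter (fun e => v ∈ e) = {e} ∧ e ∈ M ∧ v ∈ e := by
  obtain ⟨e, he⟩ := Multiset.card_eq_one.1 h
  refine ⟨e, he, ?_, ?_⟩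
  · have : e ∈ M.filter (fun e => v ∈ e) := by rw [he]; simp
    exact (Multiset.mem_filter.1 this).1
  · have : e ∈ M.filter (fun e => v ∈ e) := by rw [he]; simp
    exact (Multiset.mem_filter.1 this).2

noncomputable def partner (M : Edges n) (v : Fin n) : Fin n :=
  if h : ∃ e ∈ M, v ∈ e then (Sym2.Mem.other h.choose_spec.2) else v

lemma partner_spec {M : Edges n} {v : Fin n} (h : ∃ e ∈ M, v ∈ e) :
    s(v, partner M v) ∈ M := by
  rw [partner, dif_pos h]
  have := Sym2.other_spec h.choose_spec.2
  rw [this]; exact h.choose_spec.1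

lemma partner_spec' {M : Edges n} {v : Fin n} (h : edeg M v = 1) :
    s(v, partner M v) ∈ M := by
  obtain ⟨e, hf, he, hv⟩ := filter_eq_single h
  exact partner_spec ⟨e, he, hv⟩

lemma partner_unique {M : Edges n} {v u : Fin n} (h : edeg M v = 1)
    (hu : s(v, u) ∈ M) : u = partner M v := by
  obtain ⟨e, hf, he, hv⟩ := filter_eq_single h
  have h1 : s(v, u) ∈ M.filter (fun e => v ∈ e) := Multiset.mem_filter.2 ⟨hu, by simp⟩
  have h2 : s(v, partner M v) ∈ M.filter (fun e => v ∈ e) :=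
    Multiset.mem_filter.2 ⟨partner_spec ⟨e, he, hv⟩, by simp⟩
  rw [hf] at h1 h2
  simp only [Multiset.mem_singleton] at h1 h2
  rw [← h2] at h1
  rcases Sym2.eq_iff.1 h1 with ⟨_, h⟩ | ⟨h1', h2'⟩
  · exact h
  · rw [h2', ← h1']

lemma partner_ne {M : Edges n} {v : Fin n} (hM : Loopless M) (h : edeg M v = 1) :
    partner M v ≠ v := by
  intro hc
  have := partner_spec' h
  rw [hc] at this
  exact hM _ this (by simp [Sym2.isDiag_iff_proj_eq])

lemma partner_invol {M : Edges n} {v : Fin n} (hM : Loopless M)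
    (h : edeg M v = 1) (h2 : edeg M (partner M v) = 1) :
    partner M (partner M v) = v := by
  have hs : s(partner M v, v) ∈ M := by rw [Sym2.eq_swap]; exact partner_spec' h
  exact (partner_unique h2 hs).symm

/-- the filter of a degree-1 vertex is exactly the partner edge -/
lemma filter_partner {M : Edges n} {v : Fin n} (h : edeg M v = 1) :
    M.filter (fun e => v ∈ e) = {s(v, partner M v)} := by
  obtain ⟨e, hf, he, hv⟩ := filter_eq_single h
  rw [hf]
  congr 1
  induction e with
  | h a b =>
    rcases (Sym2.mem_iff).1 hv with rfl | rfl
    · rw [← partner_unique h he]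
    · rw [Sym2.eq_swap] at he ⊢
      rw [← partner_unique h he]

/-- A PM is determined by its partner function on S. -/
lemma pm_eq_of_partner_eq {S : Finset (Fin n)} {M M' : Edges n}
    (hM : PMOn S M) (hM' : PMOn S M')
    (h : ∀ v ∈ S, partner M v = partner M' v) : M = M' := by
  ext e
  induction e with
  | h a b =>
    by_cases hab : a = b
    · subst hab
      have h1 : s(a,a) ∉ M := fun hc => hM.1 _ hc (by simp [Sym2.isDiag_iff_proj_eq])
      have h2 : s(a,a) ∉ M' := fun hc => hM'.1 _ hc (by simp [Sym2.isDiag_iff_proj_eq])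
      simp [Multiset.count_eq_zero.2 h1, Multiset.count_eq_zero.2 h2]
    · by_cases haS : a ∈ S
      · have c1 : Multiset.count s(a,b) M = Multiset.count s(a,b) (M.filter (fun e => a ∈ e)) := by
          rw [Multiset.count_filter]
          simp
        have c2 : Multiset.count s(a,b) M' = Multiset.count s(a,b) (M'.filter (fun e => a ∈ e)) := by
          rw [Multiset.count_filter]; simp
        rw [c1, c2, filter_partner (hM.2.1 a haS), filter_partner (hM'.2.1 a haS), h a haS]
      · have h1 : s(a,b) ∉ M := by
          intro hc
          exact (mem_supp_of_mem_edge hc (by simp)) (hM.2.2 a haS)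
        have h2 : s(a,b) ∉ M' := by
          intro hc
          exact (mem_supp_of_mem_edge hc (by simp)) (hM'.2.2 a haS)
        simp [Multiset.count_eq_zero.2 h1, Multiset.count_eq_zero.2 h2]

lemma partner_mem {S : Finset (Fin n)} {M : Edges n} (hM : PMOn S M) {v : Fin n}
    (hv : v ∈ S) : partner M v ∈ S := by
  by_contra hc
  have h0 : edeg M (partner M v) = 0 := hM.2.2 _ hc
  exact (mem_supp_of_mem_edge (partner_spec' (hM.2.1 v hv)) (by simp)) h0


lemma EAdj.symm' {E : Edges n} {u v : Fin n} (h : EAdj E u v) : EAdj E v u :=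
  ⟨h.1.symm, by rw [Sym2.eq_swap]; exact h.2⟩


/-- Path insertion: replace an edge x-y of a Hamiltonian cycle on S' by a path
x-p-q-y through two new vertices. -/
lemma ham_insert {S : Finset (Fin n)} {Z : Edges n} {x y p q : Fin n}
    (hZ : HamOn S Z) (hxy : s(x,y) ∈ Z) (hx : x ∈ S) (hy : y ∈ S)
    (hp : p ∉ S) (hq : q ∉ S) (hpq : p ≠ q) :
    HamOn (insert p (insert q S)) (s(x,p) ::ₘ s(p,q) ::ₘ s(q,y) ::ₘ Z.erase s(x,y)) := by
  obtain ⟨hloop, hdeg, hdeg0, hconn⟩ := hZ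
  have hxyne : x ≠ y := fun hc => hloop _ hxy (by rw [hc]; simp [Sym2.isDiag_iff_proj_eq])
  have hpx : p ≠ x := fun hc => hp (hc ▸ hx)
  have hpy : p ≠ y := fun hc => hp (hc ▸ hy)
  have hqx : q ≠ x := fun hc => hq (hc ▸ hx)
  have hqy : q ≠ y := fun hc => hq (hc ▸ hy)
  set E' : Edges n := s(x,p) ::ₘ s(p,q) ::ₘ s(q,y) ::ₘ Z.erase s(x,y) with hE'
  have hZsplit : Z = s(x,y) ::ₘ Z.erase s(x,y) := (Multiset.cons_erase hxy).symm
  have hdeg_erase : ∀ v, edeg (Z.erase s(x,y)) v + (if v ∈ s(x,y) then 1 else 0) = edeg Z v := by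
    intro v
    conv_rhs => rw [hZsplit]
    rw [edeg_cons]; omega
  have hdegE' : ∀ v, edeg E' v =
      (if v ∈ s(x,p) then 1 else 0) + (if v ∈ s(p,q) then 1 else 0) +
      (if v ∈ s(q,y) then 1 else 0) + edeg (Z.erase s(x,y)) v := by
    intro v; rw [hE', edeg_cons, edeg_cons, edeg_cons]; ring
  -- reach lift
  have hlift : ∀ u w, Reach Z u w → Reach E' u w := by
    have hxp : Reach E' x p := Relation.ReflTransGen.single ⟨hpx.symm, by simp [hE']⟩
    have hpq' : Reach E' p q := Relation.ReflTransGen.single ⟨hpq, by simp [hE']⟩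
    have hqy' : Reach E' q y := Relation.ReflTransGen.single ⟨hqy, by simp [hE']⟩
    have hxy' : Reach E' x y := (hxp.trans hpq').trans hqy'
    intro u w hr
    induction hr with
    | refl => exact Relation.ReflTransGen.refl
    | tail hab hadj ih =>
      rename_i b c
      by_cases hbc : s(b, c) = s(x,y)
      · rcases Sym2.eq_iff.1 hbc with ⟨rfl, rfl⟩ | ⟨rfl, rfl⟩
        · exact ih.trans hxy'
        · exact ih.trans ((@Relation.ReflTransGen.symmetric _ _ ⟨fun _ _ h => h.symm'⟩).symm _ _ hxy')
      · exact ih.tail ⟨hadj.1, by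
          simp only [hE']
          refine Multiset.mem_cons_of_mem (Multiset.mem_cons_of_mem (Multiset.mem_cons_of_mem ?_))
          exact (Multiset.mem_erase_of_ne hbc).2 hadj.2⟩
  refine ⟨?_, ?_, ?_, ?_⟩
  · -- loopless
    intro e he
    rcases Multiset.mem_cons.1 he with rfl | he
    · simp [Sym2.isDiag_iff_proj_eq, hpx.symm]
    rcases Multiset.mem_cons.1 he with rfl | he
    · simp [Sym2.isDiag_iff_proj_eq, hpq]
    rcases Multiset.mem_cons.1 he with rfl | he
    · simp [Sym2.isDiag_iff_proj_eq, hqy]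
    · exact hloop _ (Multiset.mem_of_le (Multiset.erase_le _ _) he)
  · -- degree 2 on new S
    intro v hv
    rw [hdegE']
    simp only [Finset.mem_insert] at hv
    rcases hv with rfl | rfl | hv
    · -- v = p
      have h0 : edeg Z v = 0 := hdeg0 _ hp
      have := hdeg_erase v
      simp only [Sym2.mem_iff, hpx.symm, hpq, hpy] at *
      simp [hpx.symm, hpq, hpy, Sym2.mem_iff] at this ⊢
      omega
    · -- v = q
      have h0 : edeg Z v = 0 := hdeg0 _ hq
      have := hdeg_erase v
      simp [hpq.symm, hqx, hqy, Sym2.mem_iff] at this ⊢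
      omega
    · -- v ∈ S
      have h2 : edeg Z v = 2 := hdeg v hv
      have := hdeg_erase v
      have hvp : v ≠ p := fun hc => hp (hc ▸ hv)
      have hvq : v ≠ q := fun hc => hq (hc ▸ hv)
      by_cases hvx : v = x
      · subst hvx
        simp [hvp, hvq, hxyne, Sym2.mem_iff] at this ⊢
        omega
      · by_cases hvy : v = y
        · subst hvy
          simp [hvp, hvq, hvx, Sym2.mem_iff] at this ⊢
          omega
        · simp [hvp, hvq, hvx, hvy, Sym2.mem_iff] at this ⊢
          omega
  · -- degree 0 outside
    intro v hv
    simp only [Finset.mem_insert, not_or] at hv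
    obtain ⟨hvp, hvq, hvS⟩ := hv
    have h0 : edeg Z v = 0 := hdeg0 _ hvS
    have := hdeg_erase v
    have hvx : v ≠ x := fun hc => hvS (hc ▸ hx)
    have hvy : v ≠ y := fun hc => hvS (hc ▸ hy)
    rw [hdegE']
    simp [hvp, hvq, hvx, hvy, Sym2.mem_iff] at this ⊢
    omega
  · -- connectivity
    have hxp : Reach E' x p := Relation.ReflTransGen.single ⟨hpx.symm, by simp [hE']⟩
    have hxq : Reach E' x q := hxp.tail ⟨hpq, by simp [hE']⟩
    have rsymm : ∀ a b, Reach E' a b → Reach E' b a :=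
      fun a b h => (@Relation.ReflTransGen.symmetric _ _ ⟨fun _ _ h => h.symm'⟩).symm _ _ h
    have key : ∀ u ∈ S, ∀ w, w ∈ insert p (insert q S) → Reach E' u w := by
      intro u hu w hw
      simp only [Finset.mem_insert] at hw
      rcases hw with rfl | rfl | hw
      · exact (hlift u x (hconn u hu x hx)).trans hxp
      · exact (hlift u x (hconn u hu x hx)).trans hxq
      · exact hlift u w (hconn u hu w hw)
    intro u hu w hw
    simp only [Finset.mem_insert] at hu
    rcases hu with rfl | rfl | hu
    · exact (rsymm _ _ (key x hx u (by simp))).trans (key x hx w hw)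
    · exact (rsymm _ _ (key x hx u (by simp))).trans (key x hx w hw)
    · exact key u hu w hw

lemma handshake {E : Edges n} (hE : Loopless E) :
    ∑ v : Fin n, edeg E v = 2 * Multiset.card E := by
  induction E using Multiset.induction with
  | empty => simp [edeg]
  | cons e E ih =>
    have hE' : Loopless E := fun f hf => hE f (Multiset.mem_cons_of_mem hf)
    have he : ¬ e.IsDiag := hE e (Multiset.mem_cons_self e E)
    induction e with
    | h a b =>
      have hab : a ≠ b := by simpa [Sym2.mk_isDiag_iff] using he
      simp only [edeg_cons, Finset.sum_add_distrib, ih hE', Multiset.card_cons]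
      have : ∑ v : Fin n, (if v ∈ s(a,b) then 1 else 0) = 2 := by
        have h2 : ∀ v : Fin n, (if v ∈ s(a,b) then 1 else 0) =
            (if v = a then 1 else 0) + (if v = b then 1 else 0) := by
          intro v
          by_cases h1 : v = a <;> by_cases h2 : v = b <;> simp [Sym2.mem_iff, h1, h2] <;> omega
        simp only [h2, Finset.sum_add_distrib]
        simp [Finset.sum_ite_eq' Finset.univ, hab]
      omega

lemma reach_restrict {H K : Edges n}
    (hdisj : ∀ w, edeg H w = 0 ∨ edeg K w = 0) {v u : Fin n} (hv : edeg H v = 0)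
    (hr : Reach (H + K) v u) : Reach K v u ∧ edeg H u = 0 := by
  induction hr with
  | refl => exact ⟨Relation.ReflTransGen.refl, hv⟩
  | tail hab hadj ih =>
    rcases Multiset.mem_add.1 hadj.2 with h | h
    · exact absurd ih.2 (mem_supp_of_mem_edge h (by simp))
    · refine ⟨ih.1.tail ⟨hadj.1, h⟩, ?_⟩
      rcases hdisj _ with h' | h'
      · exact h'
      · exact absurd h' (mem_supp_of_mem_edge h (by simp [Sym2.mem_iff]))

lemma reach_set_eq {H K : Edges n}
    (hdisj : ∀ w, edeg H w = 0 ∨ edeg K w = 0) {v : Fin n} (hv : edeg H v = 0) :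
    {u | Reach (H + K) v u} = {u | Reach K v u} := by
  ext u
  constructor
  · intro h; exact (reach_restrict hdisj hv h).1
  · intro h; exact reach_mono (Multiset.le_add_left _ _) h

/-- Split a 2-regular graph with even components into two perfect matchings. -/
lemma split_even (N : ℕ) : ∀ (G : Edges n), Multiset.card G ≤ N → Loopless G →
    (∀ v, edeg G v = 0 ∨ edeg G v = 2) →
    (∀ v, edeg G v = 2 → Even (Set.ncard {u | Reach G v u})) →
    ∃ M₁ M₂ : Edges n, G = M₁ + M₂ ∧ Loopless M₁ ∧ Loopless M₂ ∧
      (∀ v, edeg G v = 2 → edeg M₁ v = 1 ∧ edeg M₂ v = 1) ∧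
      (∀ v, edeg G v = 0 → edeg M₁ v = 0 ∧ edeg M₂ v = 0) := by
  induction N with
  | zero =>
    intro G hcard _ _ _
    have : G = 0 := by rw [← Multiset.card_eq_zero]; omega
    subst this
    exact ⟨0, 0, by simp, fun e he => by simp at he, fun e he => by simp at he,
      fun v hv => by simp [edeg] at hv ⊢, fun v _ => by simp [edeg]⟩
  | succ N ih =>
    intro G hcard hloop hdeg hEv
    by_cases hG0 : G = 0
    · subst hG0
      exact ⟨0, 0, by simp, fun e he => by simp at he, fun e he => by simp at he,
        fun v hv => by simp [edeg] at hv ⊢, fun v _ => by simp [edeg]⟩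
    obtain ⟨e, heG⟩ := Multiset.exists_mem_of_ne_zero hG0
    obtain ⟨a, b, rfl⟩ : ∃ a b, e = s(a, b) := by
      induction e with
      | h a b => exact ⟨a, b, rfl⟩
    have hab : a ≠ b := by
      intro hc; subst hc; exact hloop _ heG (by simp [Sym2.isDiag_iff_proj_eq])
    have hdega : edeg G a = 2 := by
      rcases hdeg a with h | h
      · exact absurd h (mem_supp_of_mem_edge heG (by simp))
      · exact h
    set G₁ := G.erase s(a,b) with hG₁def
    have hGsplit : G = s(a,b) ::ₘ G₁ := (Multiset.cons_erase heG).symm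
    have hdegG : ∀ v, edeg G v = (if v ∈ s(a,b) then 1 else 0) + edeg G₁ v := by
      intro v; conv_lhs => rw [hGsplit]
      rw [edeg_cons]
    have hcard₁ : Multiset.card G₁ ≤ N := by
      have := congrArg Multiset.card hGsplit; simp at this; omega
    have hloop₁ : Loopless G₁ := loopless_of_le (Multiset.erase_le _ _) hloop
    have hdegG₁a : edeg G₁ a = 1 := by have := hdegG a; simp at this; omega
    have hdegG₁b : edeg G₁ b = 1 := by
      have h2 := hdegG b; simp [Sym2.mem_iff, Ne.symm hab] at h2
      have := hdeg b
      rcases hdeg b with h | h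
      · exact absurd h (mem_supp_of_mem_edge heG (by simp))
      · omega
    have hdeg₁ : ∀ v, v ≠ a → v ≠ b → edeg G₁ v = 0 ∨ edeg G₁ v = 2 := by
      intro v hva hvb
      have := hdegG v; simp [Sym2.mem_iff, hva, hvb] at this
      rcases hdeg v with h | h <;> omega
    obtain ⟨A, B, G₂, hsplit, hlA, hlB, hAle, hBle, hAa, hBa, hmatch, hG₂a, hG₂b, hG₂deg, hreach⟩ :=
      walk_peel N G₁ hcard₁ hloop₁ a b hab hdegG₁a hdegG₁b hdeg₁
    set H : Edges n := s(a,b) ::ₘ (A + B) with hHdef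
    have hGHsplit : G = H + G₂ := by
      rw [hGsplit, hsplit, hHdef, Multiset.cons_add, add_assoc]
    have hdegH : ∀ v, edeg H v = (if v ∈ s(a,b) then 1 else 0) + (edeg A v + edeg B v) := by
      intro v; rw [hHdef, edeg_cons, edeg_add]
    have hdegG₁split : ∀ v, edeg G₁ v = edeg A v + edeg B v + edeg G₂ v := by
      intro v; rw [hsplit, edeg_add, edeg_add]
    have hABb : edeg A b + edeg B b = 1 := by have := hdegG₁split b; omega
    have hdisj : ∀ v, edeg H v = 0 ∨ edeg G₂ v = 0 := by
      intro v
      by_cases hva : v = a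
      · subst hva; right; exact hG₂a
      by_cases hvb : v = b
      · subst hvb; right; exact hG₂b
      rcases hG₂deg v with h | h
      · right; exact h
      · left
        have := hdeg₁ v hva hvb
        rw [hdegH]; simp [Sym2.mem_iff, hva, hvb]
        have := hdegG₁split v
        omega
    have hdegH2 : ∀ v, edeg H v = 0 ∨ edeg H v = 2 := by
      intro v
      by_cases hva : v = a
      · subst hva; right; rw [hdegH]; simp [hAa, hBa]
      by_cases hvb : v = b
      · subst hvb; right; rw [hdegH]; simp [Sym2.mem_iff, Ne.symm hab]; omega
      · rw [hdegH]
        simp [Sym2.mem_iff, hva, hvb]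
        have := hmatch v hva hvb
        have := hdegG₁split v
        have := hdeg₁ v hva hvb
        rcases hG₂deg v with h | h <;> omega
    set Tfin : Finset (Fin n) := Finset.univ.filter (fun v => edeg H v ≠ 0) with hTdef
    have hmemT : ∀ v, v ∈ Tfin ↔ edeg H v ≠ 0 := by
      intro v; rw [hTdef]; simp
    have haT : a ∈ Tfin := by rw [hmemT, hdegH]; simp
    have hbT : b ∈ Tfin := by rw [hmemT, hdegH]; simp [Sym2.mem_iff, Ne.symm hab]
    have hABle : A + B ≤ G := by
      rw [hGHsplit, hHdef]
      calc A + B ≤ s(a,b) ::ₘ (A + B) := Multiset.le_cons_self _ _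
        _ ≤ H + G₂ := by rw [hHdef]; exact Multiset.le_add_right _ _
    have hreachT : {u | Reach G a u} = (Tfin : Set (Fin n)) := by
      apply Set.eq_of_subset_of_subset
      · intro u hu
        simp only [Set.mem_setOf_eq] at hu
        induction hu with
        | refl => exact haT
        | tail hr hadj ihh =>
          rename_i w u'
          rw [Finset.mem_coe, hmemT]
          have hwT : edeg H w ≠ 0 := by
            have := ihh; rw [Finset.mem_coe, hmemT] at this; exact this
          have : s(w, u') ∈ H + G₂ := by rw [← hGHsplit]; exact hadj.2
          rcases Multiset.mem_add.1 this with h | h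
          · exact mem_supp_of_mem_edge h (by simp [Sym2.mem_iff])
          · exfalso
            have : edeg G₂ w ≠ 0 := mem_supp_of_mem_edge h (by simp)
            rcases hdisj w with h' | h' <;> [exact hwT h'; exact this h']
      · intro u hu
        rw [Finset.mem_coe, hmemT] at hu
        by_cases hua : u = a
        · subst hua; exact Relation.ReflTransGen.refl
        by_cases hub : u = b
        · subst hub
          exact Relation.ReflTransGen.single ⟨hab, heG⟩
        · have : edeg (A + B) u ≠ 0 := by
            rw [hdegH] at hu; simp [Sym2.mem_iff, hua, hub] at hu
            rw [edeg_add]; omega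
          exact reach_mono hABle (hreach u this)
    have hTeven : Even Tfin.card := by
      have := hEv a hdega
      rw [hreachT, Set.ncard_coe_finset] at this
      exact this
    -- parity argument: edeg A b = 1
    have hAb : edeg A b = 1 := by
      have hsumA : ∑ v : Fin n, edeg A v = 2 * Multiset.card A := handshake hlA
      have hA0 : ∀ v, v ∉ Tfin → edeg A v = 0 := by
        intro v hv
        rw [hmemT] at hv
        push_neg at hv
        rw [hdegH] at hv
        omega
      have hA1 : ∀ v ∈ (Tfin.erase a).erase b, edeg A v = 1 := by
        intro v hv
        have hvb : v ≠ b := (Finset.mem_erase.1 hv).1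
        have hva : v ≠ a := (Finset.mem_erase.1 (Finset.mem_erase.1 hv).2).1
        have hvT : v ∈ Tfin := (Finset.mem_erase.1 (Finset.mem_erase.1 hv).2).2
        rw [hmemT] at hvT
        rcases hdegH2 v with h | h
        · exact absurd h hvT
        · rw [hdegH] at h
          simp [Sym2.mem_iff, hva, hvb] at h
          have := hmatch v hva hvb
          omega
      have hsplitsum : ∑ v : Fin n, edeg A v = ∑ v ∈ Tfin, edeg A v := by
        rw [← Finset.sum_subset (Finset.subset_univ Tfin)]
        intro v _ hv; exact hA0 v hv
      have h1 : ∑ v ∈ Tfin, edeg A v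
          = edeg A a + ∑ v ∈ Tfin.erase a, edeg A v :=
        (Finset.add_sum_erase _ _ haT).symm
      have hbT' : b ∈ Tfin.erase a := Finset.mem_erase.2 ⟨Ne.symm hab, hbT⟩
      have h2 : ∑ v ∈ Tfin.erase a, edeg A v
          = edeg A b + ∑ v ∈ (Tfin.erase a).erase b, edeg A v :=
        (Finset.add_sum_erase _ _ hbT').symm
      have h3 : ∑ v ∈ (Tfin.erase a).erase b, edeg A v = ((Tfin.erase a).erase b).card := by
        rw [Finset.sum_congr rfl hA1]; simp
      have hcardT : ((Tfin.erase a).erase b).card = Tfin.card - 2 := by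
        rw [Finset.card_erase_of_mem hbT', Finset.card_erase_of_mem haT]
        omega
      have hT2 : 2 ≤ Tfin.card := by
        have : ({a, b} : Finset (Fin n)) ⊆ Tfin := by
          intro v hv; rcases Finset.mem_insert.1 hv with rfl | hv
          · exact haT
          · rw [Finset.mem_singleton] at hv; subst hv; exact hbT
        calc 2 = ({a,b} : Finset (Fin n)).card := by rw [Finset.card_insert_of_notMem (by simp [hab]), Finset.card_singleton]
          _ ≤ Tfin.card := Finset.card_le_card this
      obtain ⟨k, hk⟩ := hTeven
      have hABb' := hABb
      omega
    have hBb : edeg B b = 0 := by omega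
    -- degrees of A and B+e on the support of H
    have hM1H : ∀ v, edeg H v = 2 → edeg A v = 1 ∧ (if v ∈ s(a,b) then 1 else 0) + edeg B v = 1 := by
      intro v hv
      by_cases hva : v = a
      · subst hva; simp [hAa, hBa]
      by_cases hvb : v = b
      · subst hvb; simp [Sym2.mem_iff, Ne.symm hab, hAb, hBb]
      · rw [hdegH] at hv
        simp [Sym2.mem_iff, hva, hvb] at hv ⊢
        have := hmatch v hva hvb
        omega
    -- recurse on G₂
    have hcard₂ : Multiset.card G₂ ≤ N := by
      have hle : G₂ ≤ G₁ := by
        rw [hsplit]; exact Multiset.le_add_left _ _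
      calc Multiset.card G₂ ≤ Multiset.card G₁ := Multiset.card_le_card hle
        _ ≤ N := hcard₁
    have hloop₂ : Loopless G₂ := by
      apply loopless_of_le _ hloop
      rw [hGHsplit]; exact Multiset.le_add_left _ _
    have hEv₂ : ∀ v, edeg G₂ v = 2 → Even (Set.ncard {u | Reach G₂ v u}) := by
      intro v hv
      have hHv : edeg H v = 0 := by
        rcases hdisj v with h | h
        · exact h
        · omega
      have := hEv v (by rw [hGHsplit, edeg_add, hHv]; omega)
      rwa [hGHsplit, reach_set_eq hdisj hHv] at this
    obtain ⟨A₂, B₂, hsplit₂, hlA₂, hlB₂, hdeg₂2, hdeg₂0⟩ :=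
      ih G₂ hcard₂ hloop₂ hG₂deg hEv₂
    refine ⟨A + A₂, (s(a,b) ::ₘ B) + B₂, ?_, ?_, ?_, ?_, ?_⟩
    · rw [hGHsplit, hsplit₂, hHdef]
      rw [← Multiset.singleton_add, ← Multiset.singleton_add]
      abel
    · intro f hf
      rcases Multiset.mem_add.1 hf with h | h
      · exact hlA f h
      · exact hlA₂ f h
    · intro f hf
      rcases Multiset.mem_add.1 hf with h | h
      · rcases Multiset.mem_cons.1 h with rfl | h
        · simp [Sym2.isDiag_iff_proj_eq, hab]
        · exact hlB f h
      · exact hlB₂ f h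
    · intro v hv
      rw [edeg_add, edeg_add, edeg_cons]
      rcases hdisj v with hH | h2
      · have hG₂v : edeg G₂ v = 2 := by rw [hGHsplit, edeg_add] at hv; omega
        have := hdeg₂2 v hG₂v
        have hAv : edeg A v = 0 := by rw [hdegH] at hH; omega
        have hBv : edeg B v = 0 := by rw [hdegH] at hH; omega
        have hvab : (if v ∈ s(a,b) then 1 else 0) = 0 := by rw [hdegH] at hH; omega
        omega
      · have hHv : edeg H v = 2 := by rw [hGHsplit, edeg_add] at hv; omega
        have := hM1H v hHv
        have := hdeg₂0 v h2
        omega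
    · intro v hv
      rw [hGHsplit, edeg_add] at hv
      have hHv : edeg H v = 0 := by omega
      have hG₂v : edeg G₂ v = 0 := by omega
      have := hdeg₂0 v hG₂v
      rw [edeg_add, edeg_add, edeg_cons]
      rw [hdegH] at hHv
      omega

/-- The lower-bound product function. -/
def bnd (c : ℕ) : ℕ → ℕ
  | 0 => 1
  | 1 => 0
  | 2 => 1
  | (k+3) => (k+2-c) * bnd c (k+1)

lemma ncard_biUnion_ge {α ι : Type*} [DecidableEq ι] (W : Finset ι) (F : ι → Set α) (m : ℕ)
    (hfin : ∀ w ∈ W, (F w).Finite)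
    (hdisj : ∀ w ∈ W, ∀ w' ∈ W, w ≠ w' → Disjoint (F w) (F w'))
    (hc : ∀ w ∈ W, m ≤ (F w).ncard) :
    W.card * m ≤ (⋃ w ∈ W, F w).ncard := by
  induction W using Finset.induction_on with
  | empty => simp
  | @insert a W ha ih =>
    have hunion : (⋃ w ∈ insert a W, F w) = F a ∪ (⋃ w ∈ W, F w) := by
      simp [Set.iUnion_iUnion_eq_or_left]
    have hWfin : (⋃ w ∈ W, F w).Finite :=
      Set.Finite.biUnion W.finite_toSet (fun w hw => hfin w (Finset.mem_insert_of_mem hw))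
    have hdisj' : Disjoint (F a) (⋃ w ∈ W, F w) := by
      rw [Set.disjoint_iUnion₂_right]
      intro w hw
      exact hdisj a (Finset.mem_insert_self a W) w (Finset.mem_insert_of_mem hw)
        (fun hc => ha (hc ▸ hw))
    rw [hunion, Finset.card_insert_of_notMem ha, add_mul, one_mul]
    rw [Set.ncard_union_eq hdisj' (hfin a (Finset.mem_insert_self a W)) hWfin]
    have h1 := hc a (Finset.mem_insert_self a W)
    have h2 := ih (fun w hw => hfin w (Finset.mem_insert_of_mem hw))
      (fun w hw w' hw' hne => hdisj w (Finset.mem_insert_of_mem hw) w' (Finset.mem_insert_of_mem hw') hne)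
      (fun w hw => hc w (Finset.mem_insert_of_mem hw))
    omega

lemma pm_card_le {S : Finset (Fin n)} {N : Edges n} (h : PMOn S N) :
    Multiset.card N ≤ n := by
  have hs := handshake h.1
  have : ∑ v : Fin n, edeg N v ≤ ∑ _v : Fin n, 1 := by
    apply Finset.sum_le_sum
    intro v _
    by_cases hv : v ∈ S
    · rw [h.2.1 v hv]
    · rw [h.2.2 v hv]; omega
  simp at this
  omega

lemma goodset_finite (S : Finset (Fin n)) (L : List (Edges n)) :
    {N : Edges n | PMOn S N ∧ ∀ A ∈ L, HamOn S (A + N)}.Finite := by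
  apply Set.Finite.subset (finite_card_le (n := n) n)
  intro N hN
  exact pm_card_le hN.1

lemma pm_two {a b : Fin n} (hab : a ≠ b) {A : Edges n} (hA : PMOn {a, b} A) :
    A = {s(a,b)} := by
  have hpm : PMOn ({a, b} : Finset (Fin n)) ({s(a,b)} : Edges n) := by
    refine ⟨?_, ?_, ?_⟩
    · intro e he; rw [Multiset.mem_singleton] at he; subst he
      simp [Sym2.isDiag_iff_proj_eq, hab]
    · intro v hv
      rw [show ({s(a,b)} : Edges n) = s(a,b) ::ₘ 0 from rfl, edeg_cons]
      rcases Finset.mem_insert.1 hv with rfl | hv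
      · simp [edeg]
      · rw [Finset.mem_singleton] at hv; subst hv
        simp [edeg, Sym2.mem_iff]
    · intro v hv
      simp only [Finset.mem_insert, Finset.mem_singleton, not_or] at hv
      rw [show ({s(a,b)} : Edges n) = s(a,b) ::ₘ 0 from rfl, edeg_cons]
      simp [edeg, Sym2.mem_iff, hv.1, hv.2]
  apply pm_eq_of_partner_eq hA hpm
  intro v hv
  have haS : a ∈ ({a,b} : Finset (Fin n)) := by simp
  have hbS : b ∈ ({a,b} : Finset (Fin n)) := by simp
  rcases Finset.mem_insert.1 hv with rfl | hv
  · have h1 : partner A v ∈ ({v, b} : Finset (Fin n)) := partner_mem hA (by simp)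
    have h2 : partner A v ≠ v := partner_ne hA.1 (hA.2.1 v (by simp))
    have h3 : partner A v = b := by
      rcases Finset.mem_insert.1 h1 with h | h
      · exact absurd h h2
      · exact Finset.mem_singleton.1 h
    rw [h3]
    exact partner_unique (hpm.2.1 v (by simp)) (Multiset.mem_singleton_self _)
  · rw [Finset.mem_singleton] at hv; subst hv
    have h1 : partner A v ∈ ({a, v} : Finset (Fin n)) := partner_mem hA (by simp)
    have h2 : partner A v ≠ v := partner_ne hA.1 (hA.2.1 v (by simp))
    have h3 : partner A v = a := by
      rcases Finset.mem_insert.1 h1 with h | h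
      · exact h
      · exact absurd (Finset.mem_singleton.1 h) h2
    rw [h3]
    apply partner_unique (hpm.2.1 v (by simp))
    rw [Sym2.eq_swap]
    exact Multiset.mem_singleton_self _
lemma pm_single {a b : Fin n} (hab : a ≠ b) : PMOn ({a, b} : Finset (Fin n)) ({s(a,b)} : Edges n) := by
  refine ⟨?_, ?_, ?_⟩
  · intro e he; rw [Multiset.mem_singleton] at he; subst he
    simp [Sym2.isDiag_iff_proj_eq, hab]
  · intro v hv
    rw [show ({s(a,b)} : Edges n) = s(a,b) ::ₘ 0 from rfl, edeg_cons]
    rcases Finset.mem_insert.1 hv with rfl | hv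
    · simp [edeg]
    · rw [Finset.mem_singleton] at hv; subst hv
      simp [edeg, Sym2.mem_iff]
  · intro v hv
    simp only [Finset.mem_insert, Finset.mem_singleton, not_or] at hv
    rw [show ({s(a,b)} : Edges n) = s(a,b) ::ₘ 0 from rfl, edeg_cons]
    simp [edeg, Sym2.mem_iff, hv.1, hv.2]

lemma cnt_zero (S : Finset (Fin n)) (L : List (Edges n)) (hcard : S.card = 0)
    (hL : ∀ A ∈ L, PMOn S A) :
    1 ≤ Set.ncard {N : Edges n | PMOn S N ∧ ∀ A ∈ L, HamOn S (A + N)} := by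
  rw [Finset.card_eq_zero] at hcard; subst hcard
  have h0 : (0 : Edges n) ∈ {N : Edges n | PMOn ∅ N ∧ ∀ A ∈ L, HamOn ∅ (A + N)} := by
    constructor
    · exact ⟨fun e he => by simp at he, fun v hv => by simp at hv, fun v _ => rfl⟩
    · intro A hA
      rw [add_zero]
      exact ⟨(hL A hA).1, fun v hv => by simp at hv, fun v hv => (hL A hA).2.2 v hv,
        fun u hu => by simp at hu⟩
  exact (Set.ncard_pos (goodset_finite _ _)).2 ⟨0, h0⟩

lemma cnt_two (S : Finset (Fin n)) (L : List (Edges n)) (hcard : S.card = 2)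
    (hL : ∀ A ∈ L, PMOn S A) :
    1 ≤ Set.ncard {N : Edges n | PMOn S N ∧ ∀ A ∈ L, HamOn S (A + N)} := by
  obtain ⟨a, b, hab, rfl⟩ := Finset.card_eq_two.1 hcard
  have hmem : ({s(a,b)} : Edges n) ∈
      {N : Edges n | PMOn {a,b} N ∧ ∀ A ∈ L, HamOn {a,b} (A + N)} := by
    constructor
    · exact pm_single hab
    · intro A hA
      rw [pm_two hab (hL A hA)]
      have hdd : ({s(a,b)} : Edges n) + {s(a,b)} = s(a,b) ::ₘ ({s(a,b)} : Edges n) := rfl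
      rw [hdd]
      refine ⟨?_, ?_, ?_, ?_⟩
      · intro e he
        rcases Multiset.mem_cons.1 he with rfl | he
        · simp [Sym2.isDiag_iff_proj_eq, hab]
        · rw [Multiset.mem_singleton] at he; subst he
          simp [Sym2.isDiag_iff_proj_eq, hab]
      · intro v hv
        rw [edeg_cons]
        rcases Finset.mem_insert.1 hv with rfl | hv
        · simp [(pm_single hab).2.1 v (by simp : v ∈ ({v,b} : Finset (Fin n)))]
        · rw [Finset.mem_singleton] at hv; subst hv
          simp [Sym2.mem_iff, (pm_single hab).2.1 v (by simp : v ∈ ({a,v} : Finset (Fin n)))]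
      · intro v hv
        rw [edeg_cons]
        have h0 := (pm_single hab).2.2 v hv
        simp only [Finset.mem_insert, Finset.mem_singleton, not_or] at hv
        simp [Sym2.mem_iff, hv.1, hv.2, h0]
      · intro u hu v hv
        have hstep : ∀ x y : Fin n, x ∈ ({a,b} : Finset (Fin n)) → y ∈ ({a,b} : Finset (Fin n)) →
            x ≠ y → EAdj (s(a,b) ::ₘ ({s(a,b)} : Edges n)) x y := by
          intro x y hx hy hxy
          refine ⟨hxy, ?_⟩
          rcases Finset.mem_insert.1 hx with rfl | hx
          · have : y = b := by
              rcases Finset.mem_insert.1 hy with rfl | hy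
              · exact absurd rfl hxy
              · exact Finset.mem_singleton.1 hy
            subst this; simp
          · rw [Finset.mem_singleton] at hx; subst hx
            have : y = a := by
              rcases Finset.mem_insert.1 hy with rfl | hy
              · rfl
              · rw [Finset.mem_singleton] at hy; subst hy; exact absurd rfl hxy
            subst this
            rw [Sym2.eq_swap]; simp
        by_cases huv : u = v
        · subst huv; exact Relation.ReflTransGen.refl
        · exact Relation.ReflTransGen.single (hstep u v hu hv huv)
  exact (Set.ncard_pos (goodset_finite _ _)).2 ⟨_, hmem⟩

/-- Contraction of a perfect matching through two chosen vertices. -/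
lemma contract_pm {S : Finset (Fin n)} {A : Edges n} (hA : PMOn S A) {a₀ w : Fin n}
    (ha₀ : a₀ ∈ S) (hw : w ∈ S) (hwa : w ≠ a₀) (hwp : w ≠ partner A a₀) :
    ∃ R : Edges n,
      R = (A.erase s(a₀, partner A a₀)).erase s(w, partner A w) ∧
      A = s(a₀, partner A a₀) ::ₘ s(w, partner A w) ::ₘ R ∧
      PMOn (S \ {a₀, w}) (s(partner A a₀, partner A w) ::ₘ R) ∧
      partner A a₀ ∈ S \ {a₀, w} ∧ partner A w ∈ S \ {a₀, w} ∧
      partner A a₀ ≠ partner A w := by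
  set α := partner A a₀ with hα
  set β := partner A w with hβ
  have hdega₀ : edeg A a₀ = 1 := hA.2.1 a₀ ha₀
  have hdegw : edeg A w = 1 := hA.2.1 w hw
  have hαS : α ∈ S := partner_mem hA ha₀
  have hβS : β ∈ S := partner_mem hA hw
  have hαa₀ : α ≠ a₀ := partner_ne hA.1 hdega₀
  have hβw : β ≠ w := partner_ne hA.1 hdegw
  have hαw : α ≠ w := fun hc => hwp (hc.symm)
  have hβa₀ : β ≠ a₀ := by
    intro hc
    have h1 : partner A β = w := partner_invol hA.1 hdegw (hA.2.1 β hβS)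
    rw [hc] at h1
    exact hwp h1.symm
  have he1 : s(a₀, α) ∈ A := partner_spec' hdega₀
  have he2 : s(w, β) ∈ A := partner_spec' hdegw
  have hαβ : α ≠ β := by
    intro hc
    have hdegα : edeg A α = 1 := hA.2.1 α hαS
    have hf := filter_partner hdegα
    have m1 : s(a₀, α) ∈ A.filter (fun e => α ∈ e) :=
      Multiset.mem_filter.2 ⟨he1, by simp⟩
    have m2 : s(w, β) ∈ A.filter (fun e => α ∈ e) :=
      Multiset.mem_filter.2 ⟨he2, by rw [← hc]; simp⟩
    rw [hf] at m1 m2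
    rw [Multiset.mem_singleton] at m1 m2
    rw [← m2] at m1
    rcases Sym2.eq_iff.1 m1 with ⟨h1, _⟩ | ⟨h1, h2⟩
    · exact hwa h1.symm
    · exact hαw h2
  have hne12 : s(w, β) ≠ s(a₀, α) := by
    intro hc
    rcases Sym2.eq_iff.1 hc with ⟨h1, _⟩ | ⟨_, h2⟩
    · exact hwa h1
    · exact hβa₀ h2
  have he2' : s(w, β) ∈ A.erase s(a₀, α) := (Multiset.mem_erase_of_ne hne12).2 he2
  set R := (A.erase s(a₀, α)).erase s(w, β) with hR
  have hAsplit : A = s(a₀, α) ::ₘ s(w, β) ::ₘ R := by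
    rw [hR, Multiset.cons_erase he2', Multiset.cons_erase he1]
  have hRA : ∀ v, edeg A v = (if v ∈ s(a₀,α) then 1 else 0) + ((if v ∈ s(w,β) then 1 else 0) + edeg R v) := by
    intro v; conv_lhs => rw [hAsplit]
    rw [edeg_cons, edeg_cons]
  have hRle : R ≤ A := le_trans (Multiset.erase_le _ _) (Multiset.erase_le _ _)
  refine ⟨R, hR, hAsplit, ⟨?_, ?_, ?_⟩, ?_, ?_, hαβ⟩
  · intro e he
    rcases Multiset.mem_cons.1 he with rfl | he
    · simp [Sym2.isDiag_iff_proj_eq, hαβ]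
    · exact hA.1 e (Multiset.mem_of_le hRle he)
  · intro v hv
    rw [Finset.mem_sdiff] at hv
    obtain ⟨hvS, hv2⟩ := hv
    simp only [Finset.mem_insert, Finset.mem_singleton, not_or] at hv2
    obtain ⟨hva₀, hvw⟩ := hv2
    have hAv : edeg A v = 1 := hA.2.1 v hvS
    rw [edeg_cons]
    by_cases hvα : v = α
    · rw [hvα]
      have h1 := hRA α
      have h2 : edeg A α = 1 := hA.2.1 α hαS
      simp [Sym2.mem_iff, hαw, hαβ] at h1 ⊢
      omega
    · by_cases hvβ : v = β
      · rw [hvβ]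
        have h1 := hRA β
        have h2 : edeg A β = 1 := hA.2.1 β hβS
        simp [Sym2.mem_iff, hβa₀, Ne.symm hαβ] at h1 ⊢
        omega
      · have := hRA v
        simp [Sym2.mem_iff, hva₀, hvw, hvα, hvβ] at this ⊢
        omega
  · intro v hv
    rw [Finset.mem_sdiff] at hv
    push_neg at hv
    rw [edeg_cons]
    by_cases hvS : v ∈ S
    · have hv2 := hv hvS
      simp only [Finset.mem_insert, Finset.mem_singleton] at hv2
      rcases hv2 with h | h
      · -- v = a₀
        rw [h]
        have h1 := hRA a₀
        have h2 : edeg A a₀ = 1 := hA.2.1 a₀ ha₀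
        simp [Sym2.mem_iff, Ne.symm hαa₀, Ne.symm hwa, Ne.symm hβa₀] at h1 ⊢
        omega
      · -- v = w
        rw [h]
        have h1 := hRA w
        have h2 : edeg A w = 1 := hA.2.1 w hw
        simp [Sym2.mem_iff, hwa, Ne.symm hαw, Ne.symm hβw] at h1 ⊢
        omega
    · have hAv : edeg A v = 0 := hA.2.2 v hvS
      have hRv : edeg R v = 0 := by
        have := edeg_le_of_le hRle v; omega
      have hvα : v ≠ α := fun hc => hvS (hc ▸ hαS)
      have hvβ : v ≠ β := fun hc => hvS (hc ▸ hβS)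
      simp [Sym2.mem_iff, hvα, hvβ, hRv]
  · rw [Finset.mem_sdiff]
    exact ⟨hαS, by simp [hαa₀, hαw]⟩
  · rw [Finset.mem_sdiff]
    exact ⟨hβS, by simp [hβa₀, hβw]⟩
lemma cnt (F : ℕ) : ∀ (k : ℕ), k ≤ F → ∀ (S : Finset (Fin n)) (L : List (Edges n)),
    S.card = k → (∀ A ∈ L, PMOn S A) →
    bnd L.length k ≤ Set.ncard {N : Edges n | PMOn S N ∧ ∀ A ∈ L, HamOn S (A + N)} := by
  induction F with
  | zero =>
    intro k hk S L hcard hL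
    have : k = 0 := by omega
    subst this
    exact cnt_zero S L hcard hL
  | succ F ihF =>
    intro k hk S L hcard hL
    match k, hcard with
    | 0, hcard => exact cnt_zero S L hcard hL
    | 1, hcard => rw [show bnd L.length 1 = 0 from rfl]; exact Nat.zero_le _
    | 2, hcard => exact cnt_two S L hcard hL
    | (m+3), hcard =>
      classical
      set c := L.length with hc
      set goodset := {N : Edges n | PMOn S N ∧ ∀ A ∈ L, HamOn S (A + N)} with hgs
      obtain ⟨a₀, ha₀⟩ : ∃ a, a ∈ S := Finset.card_pos.1 (by omega)
      set pset : Finset (Fin n) := insert a₀ (L.map (fun A => partner A a₀)).toFinset with hpset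
      set W : Finset (Fin n) := S \ pset with hWdef
      have hWcard : m + 2 - c ≤ W.card := by
        have h1 : pset.card ≤ 1 + c := by
          calc pset.card ≤ (L.map (fun A => partner A a₀)).toFinset.card + 1 :=
              Finset.card_insert_le _ _
            _ ≤ (L.map (fun A => partner A a₀)).length + 1 := by
              have := (L.map (fun A => partner A a₀)).toFinset_card_le
              omega
            _ = 1 + c := by rw [List.length_map]; omega
        have h2 : S.card ≤ W.card + pset.card := by
          rw [hWdef]; exact Finset.card_le_card_sdiff_add_card
        omega
      -- the per-w good set injection
      have hkey : ∀ w ∈ W,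
          bnd c (m+1) ≤ Set.ncard ((fun N' => s(a₀, w) ::ₘ N') '' {N' : Edges n |
            PMOn (S \ {a₀, w}) N' ∧ ∀ A' ∈ L.map (fun A =>
              s(partner A a₀, partner A w) ::ₘ ((A.erase s(a₀, partner A a₀)).erase s(w, partner A w))),
              HamOn (S \ {a₀, w}) (A' + N')}) ∧
          (fun N' => s(a₀, w) ::ₘ N') '' {N' : Edges n |
            PMOn (S \ {a₀, w}) N' ∧ ∀ A' ∈ L.map (fun A =>
              s(partner A a₀, partner A w) ::ₘ ((A.erase s(a₀, partner A a₀)).erase s(w, partner A w))),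
              HamOn (S \ {a₀, w}) (A' + N')} ⊆ goodset ∩ {N | partner N a₀ = w} := by
        intro w hwW
        rw [hWdef, Finset.mem_sdiff] at hwW
        obtain ⟨hwS, hwp⟩ := hwW
        rw [hpset] at hwp
        simp only [Finset.mem_insert, List.mem_toFinset, List.mem_map, not_or, not_exists] at hwp
        obtain ⟨hwa, hwpart⟩ := hwp
        set S' : Finset (Fin n) := S \ {a₀, w} with hS'
        have hsub2 : ({a₀, w} : Finset (Fin n)) ⊆ S := by
          intro v hv
          rcases Finset.mem_insert.1 hv with rfl | hv
          · exact ha₀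
          · rw [Finset.mem_singleton] at hv; subst hv; exact hwS
        have hc2 : ({a₀, w} : Finset (Fin n)).card = 2 := by
          rw [Finset.card_insert_of_notMem (by simp [Ne.symm hwa]), Finset.card_singleton]
        have hS'card : S'.card = m + 1 := by
          rw [hS', Finset.card_sdiff_of_subset hsub2, hcard, hc2]
          omega
        set L' : List (Edges n) := L.map (fun A =>
          s(partner A a₀, partner A w) ::ₘ ((A.erase s(a₀, partner A a₀)).erase s(w, partner A w))) with hL'
        have hL'pm : ∀ A' ∈ L', PMOn S' A' := by
          intro A' hA'
          rw [hL', List.mem_map] at hA'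
          obtain ⟨A, hAL, rfl⟩ := hA'
          obtain ⟨R, hReq, hAsplit, hpm, _⟩ := contract_pm (hL A hAL) ha₀ hwS hwa
            (fun hc => hwpart A ⟨hAL, hc.symm⟩)
          rw [← hReq]
          exact hpm
        have hrec := ihF (m+1) (by omega) S' L' hS'card hL'pm
        rw [show L'.length = c from by rw [hL', List.length_map]] at hrec
        constructor
        · rw [Set.ncard_image_of_injective _
            (fun x y h => (Multiset.cons_inj_right s(a₀, w)).1 h)]
          exact hrec
        · rintro N ⟨N', hN', rfl⟩
          obtain ⟨hN'pm, hN'ham⟩ := hN'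
          have ha₀S' : a₀ ∉ S' := by rw [hS']; simp
          have hwS' : w ∉ S' := by rw [hS']; simp
          have hN'a₀ : edeg N' a₀ = 0 := hN'pm.2.2 a₀ ha₀S'
          have hN'w : edeg N' w = 0 := hN'pm.2.2 w hwS'
          have hNpm : PMOn S (s(a₀, w) ::ₘ N') := by
            refine ⟨?_, ?_, ?_⟩
            · intro e he
              rcases Multiset.mem_cons.1 he with rfl | he
              · simp [Sym2.isDiag_iff_proj_eq, Ne.symm hwa]
              · exact hN'pm.1 e he
            · intro v hv
              rw [edeg_cons]
              by_cases hva : v = a₀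
              · rw [hva]; simp [hN'a₀]
              · by_cases hvw : v = w
                · rw [hvw]; simp [Sym2.mem_iff, hwa, hN'w]
                · have hvS' : v ∈ S' := by rw [hS']; simp [hv, hva, hvw]
                  simp [Sym2.mem_iff, hva, hvw, hN'pm.2.1 v hvS']
            · intro v hv
              rw [edeg_cons]
              have hva : v ≠ a₀ := fun hc => hv (hc ▸ ha₀)
              have hvw : v ≠ w := fun hc => hv (hc ▸ hwS)
              have hvS' : v ∉ S' := by rw [hS']; simp [hv]
              simp [Sym2.mem_iff, hva, hvw, hN'pm.2.2 v hvS']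
          refine ⟨⟨hNpm, ?_⟩, ?_⟩
          · intro A hAL
            obtain ⟨R, hReq, hAsplit, hpm, hαS', hβS', hαβ⟩ := contract_pm (hL A hAL) ha₀ hwS hwa
              (fun hc => hwpart A ⟨hAL, hc.symm⟩)
            set α := partner A a₀
            set β := partner A w
            have hA' : (s(α, β) ::ₘ R) ∈ L' := by
              rw [hL', List.mem_map]
              exact ⟨A, hAL, by rw [hReq]⟩
            have hZ : HamOn S' ((s(α, β) ::ₘ R) + N') := hN'ham _ hA'
            have hZ' : HamOn S' (s(α, β) ::ₘ (R + N')) := by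
              rwa [Multiset.cons_add] at hZ
            have hins := ham_insert hZ' (Multiset.mem_cons_self _ _) hαS' hβS'
              ha₀S' hwS' (Ne.symm hwa)
            rw [Multiset.erase_cons_head] at hins
            have hSins : insert a₀ (insert w S') = S := by
              ext v
              simp only [Finset.mem_insert, hS', Finset.mem_sdiff, Finset.mem_insert,
                Finset.mem_singleton]
              constructor
              · rintro (rfl | rfl | ⟨h, _⟩)
                · exact ha₀
                · exact hwS
                · exact h
              · intro hv
                by_cases h1 : v = a₀
                · left; exact h1
                · by_cases h2 : v = w
                  · right; left; exact h2
                  · right; right; exact ⟨hv, by tauto⟩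
            rw [hSins] at hins
            have hmeq : s(α, a₀) ::ₘ s(a₀, w) ::ₘ s(w, β) ::ₘ (R + N')
                = A + (s(a₀, w) ::ₘ N') := by
              rw [hAsplit]
              rw [show s(α, a₀) = s(a₀, α) from Sym2.eq_swap]
              rw [← Multiset.singleton_add, ← Multiset.singleton_add, ← Multiset.singleton_add,
                ← Multiset.singleton_add, ← Multiset.singleton_add, ← Multiset.singleton_add]
              abel
            rwa [hmeq] at hins
          · -- partner is w
            simp only [Set.mem_setOf_eq]
            exact (partner_unique (hNpm.2.1 a₀ ha₀) (Multiset.mem_cons_self _ _)).symm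
      -- assemble the union bound
      have hdisj : ∀ w ∈ W, ∀ w' ∈ W, w ≠ w' →
          Disjoint ((fun N' => s(a₀, w) ::ₘ N') '' {N' : Edges n |
            PMOn (S \ {a₀, w}) N' ∧ ∀ A' ∈ L.map (fun A =>
              s(partner A a₀, partner A w) ::ₘ ((A.erase s(a₀, partner A a₀)).erase s(w, partner A w))),
              HamOn (S \ {a₀, w}) (A' + N')})
            ((fun N' => s(a₀, w') ::ₘ N') '' {N' : Edges n |
            PMOn (S \ {a₀, w'}) N' ∧ ∀ A' ∈ L.map (fun A =>
              s(partner A a₀, partner A w') ::ₘ ((A.erase s(a₀, partner A a₀)).erase s(w', partner A w'))),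
              HamOn (S \ {a₀, w'}) (A' + N')}) := by
        intro w hw w' hw' hne
        rw [Set.disjoint_left]
        intro N hN hN'
        have h1 : partner N a₀ = w := ((hkey w hw).2 hN).2
        have h2 : partner N a₀ = w' := ((hkey w' hw').2 hN').2
        exact hne (h1 ▸ h2)
      have hfin : ∀ w ∈ W, ((fun N' => s(a₀, w) ::ₘ N') '' {N' : Edges n |
            PMOn (S \ {a₀, w}) N' ∧ ∀ A' ∈ L.map (fun A =>
              s(partner A a₀, partner A w) ::ₘ ((A.erase s(a₀, partner A a₀)).erase s(w, partner A w))),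
              HamOn (S \ {a₀, w}) (A' + N')}).Finite := by
        intro w _
        exact Set.Finite.image _ (goodset_finite _ _)
      have hDU := ncard_biUnion_ge W _ (bnd c (m+1)) hfin hdisj (fun w hw => (hkey w hw).1)
      have hsub : (⋃ w ∈ W, (fun N' => s(a₀, w) ::ₘ N') '' {N' : Edges n |
            PMOn (S \ {a₀, w}) N' ∧ ∀ A' ∈ L.map (fun A =>
              s(partner A a₀, partner A w) ::ₘ ((A.erase s(a₀, partner A a₀)).erase s(w, partner A w))),
              HamOn (S \ {a₀, w}) (A' + N')}) ⊆ goodset := by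
        intro N hN
        rw [Set.mem_iUnion₂] at hN
        obtain ⟨w, hw, hN⟩ := hN
        exact (Set.inter_subset_left) (((hkey w hw).2) hN)
      calc bnd c (m+3) = (m + 2 - c) * bnd c (m+1) := rfl
        _ ≤ W.card * bnd c (m+1) := Nat.mul_le_mul_right _ hWcard
        _ ≤ _ := hDU
        _ ≤ Set.ncard goodset := Set.ncard_le_ncard hsub (goodset_finite S L)
lemma ham_no_dup {C : Edges n} (hn : 4 ≤ n) (hC : HamOn Finset.univ C) :
    ∀ e, C.count e ≤ 1 := by
  intro e
  by_contra hc
  push_neg at hc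
  have heC : e ∈ C := by
    rw [← Multiset.count_pos]; omega
  obtain ⟨u, v, rfl⟩ : ∃ u v, e = s(u, v) := by
    induction e with
    | h a b => exact ⟨a, b, rfl⟩
  have huv : u ≠ v := by
    intro h; subst h; exact hC.1 _ heC (by simp [Sym2.isDiag_iff_proj_eq])
  -- every edge at u or v is equal to e
  have hall : ∀ a b : Fin n, a ∈ s(u,v) → s(a, b) ∈ C → s(a, b) = s(u, v) := by
    intro a b ha hab
    have hfc : Multiset.card (C.filter (fun f => a ∈ f)) = 2 :=
      hC.2.1 a (Finset.mem_univ a)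
    have hrep : Multiset.replicate 2 s(u,v) ≤ C.filter (fun f => a ∈ f) := by
      rw [Multiset.le_iff_count]
      intro f
      by_cases hf : f = s(u,v)
      · subst hf
        rw [Multiset.count_replicate_self, Multiset.count_filter_of_pos (p := fun f => a ∈ f) ha]
        omega
      · rw [Multiset.count_replicate, if_neg (fun hc => hf hc.symm)]
        exact Nat.zero_le _
    have : C.filter (fun f => a ∈ f) = Multiset.replicate 2 s(u,v) :=
      (Multiset.eq_of_le_of_card_le hrep (by rw [hfc, Multiset.card_replicate])).symm
    have hmem : s(a,b) ∈ C.filter (fun f => a ∈ f) :=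
      Multiset.mem_filter.2 ⟨hab, by simp⟩
    rw [this] at hmem
    exact Multiset.eq_of_mem_replicate hmem
  have hstay : ∀ w, Reach C u w → w ∈ s(u, v) := by
    intro w hr
    induction hr with
    | refl => simp
    | tail hr hadj ih =>
      rename_i a b
      have := hall a b ih hadj.2
      have hb : b ∈ s(a, b) := by simp
      rw [this] at hb
      exact hb
  -- but there are more than 2 vertices
  have : ∃ z : Fin n, z ∉ ({u, v} : Finset (Fin n)) := by
    by_contra h
    push_neg at h
    have : (Finset.univ : Finset (Fin n)).card ≤ ({u, v} : Finset (Fin n)).card :=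
      Finset.card_le_card (fun z _ => h z)
    have h2 : ({u, v} : Finset (Fin n)).card ≤ 2 := Finset.card_insert_le _ _ |>.trans (by simp)
    rw [Finset.card_univ, Fintype.card_fin] at this
    omega
  obtain ⟨z, hz⟩ := this
  have := hstay z (hC.2.2.2 u (Finset.mem_univ u) z (Finset.mem_univ z))
  rw [Sym2.mem_iff] at this
  simp at hz
  tauto

lemma ham_split_pairs {C P Q P' Q' : Edges n} (hn : 4 ≤ n) (hC : HamOn Finset.univ C)
    (hP : PMOn Finset.univ P) (hQ : PMOn Finset.univ Q)
    (hP' : PMOn Finset.univ P') (hQ' : PMOn Finset.univ Q')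
    (hPQ : P + Q = C) (hPQ' : P' + Q' = C) :
    (P' = P ∧ Q' = Q) ∨ (P' = Q ∧ Q' = P) := by
  have hdup := ham_no_dup hn hC
  have v0 : Fin n := ⟨0, by omega⟩
  -- main argument, for a generic pair (P,Q)
  have main : ∀ (P Q : Edges n), PMOn Finset.univ P → PMOn Finset.univ Q →
      P + Q = C → partner P' v0 = partner P v0 → P' = P ∧ Q' = Q := by
    intro P Q hP hQ hPQ hbase
    -- partner facts
    have hPne : ∀ v, partner P v ≠ partner Q v := by
      intro v hc
      have h1 : s(v, partner P v) ∈ P := partner_spec' (hP.2.1 v (Finset.mem_univ v))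
      have h2 : s(v, partner P v) ∈ Q := by rw [hc]; exact partner_spec' (hQ.2.1 v (Finset.mem_univ v))
      have : 2 ≤ C.count s(v, partner P v) := by
        rw [← hPQ, Multiset.count_add]
        have := Multiset.count_pos.2 h1
        have := Multiset.count_pos.2 h2
        omega
      have := hdup s(v, partner P v)
      omega
    have hCedge : ∀ v w, s(v, w) ∈ C → w = partner P v ∨ w = partner Q v := by
      intro v w hvw
      have hfilter : C.filter (fun f => v ∈ f) = {s(v, partner P v)} + {s(v, partner Q v)} := by
        rw [← hPQ, Multiset.filter_add,
          filter_partner (hP.2.1 v (Finset.mem_univ v)),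
          filter_partner (hQ.2.1 v (Finset.mem_univ v))]
      have hmem : s(v,w) ∈ C.filter (fun f => v ∈ f) :=
        Multiset.mem_filter.2 ⟨hvw, by simp⟩
      rw [hfilter] at hmem
      rcases Multiset.mem_add.1 hmem with h | h <;> rw [Multiset.mem_singleton] at h
      · left
        rcases Sym2.eq_iff.1 h with ⟨_, h2⟩ | ⟨h1, h2⟩
        · exact h2
        · exact absurd h1.symm (partner_ne hP.1 (hP.2.1 v (Finset.mem_univ v)))
      · right
        rcases Sym2.eq_iff.1 h with ⟨_, h2⟩ | ⟨h1, h2⟩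
        · exact h2
        · exact absurd h1.symm (partner_ne hQ.1 (hQ.2.1 v (Finset.mem_univ v)))
    have hP'le : P' ≤ C := by rw [← hPQ']; exact Multiset.le_add_right _ _
    have hP'edge : ∀ v, partner P' v = partner P v ∨ partner P' v = partner Q v := by
      intro v
      have h1 : s(v, partner P' v) ∈ C :=
        Multiset.mem_of_le hP'le (partner_spec' (hP'.2.1 v (Finset.mem_univ v)))
      exact hCedge v _ h1
    -- agreement propagates
    have hprop : ∀ v, partner P' v = partner P v →
        (partner P' (partner P v) = partner P (partner P v)) ∧
        (partner P' (partner Q v) = partner P (partner Q v)) := by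
      intro v hAg
      constructor
      · have h1 : s(v, partner P v) ∈ P' := by
          rw [← hAg]; exact partner_spec' (hP'.2.1 v (Finset.mem_univ v))
        have h2 : s(partner P v, v) ∈ P' := by rw [Sym2.eq_swap]; exact h1
        have h3 : v = partner P' (partner P v) :=
          partner_unique (hP'.2.1 _ (Finset.mem_univ _)) h2
        have h4 : partner P (partner P v) = v :=
          partner_invol hP.1 (hP.2.1 v (Finset.mem_univ v)) (hP.2.1 _ (Finset.mem_univ _))
        rw [← h3, h4]
      · set u' := partner Q v with hu'
        have hQinv : partner Q u' = v :=
          partner_invol hQ.1 (hQ.2.1 v (Finset.mem_univ v)) (hQ.2.1 _ (Finset.mem_univ _))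
        rcases hP'edge u' with h | h
        · exact h
        · exfalso
          rw [hQinv] at h
          -- s(u', v) ∈ P', so partner P' v = u', contradicting hAg and hPne
          have h1 : s(u', v) ∈ P' := by
            have := partner_spec' (hP'.2.1 u' (Finset.mem_univ u'))
            rwa [h] at this
          have h2 : s(v, u') ∈ P' := by rw [Sym2.eq_swap]; exact h1
          have h3 : u' = partner P' v := partner_unique (hP'.2.1 v (Finset.mem_univ v)) h2
          rw [hAg] at h3
          exact hPne v (h3.symm ▸ rfl)
    have hAg_all : ∀ w, partner P' w = partner P w := by
      intro w
      have hr : Reach C v0 w := hC.2.2.2 v0 (Finset.mem_univ v0) w (Finset.mem_univ w)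
      clear hdup
      induction hr with
      | refl => exact hbase
      | tail hr hadj ih =>
        rename_i a b
        rcases hCedge a b hadj.2 with rfl | rfl
        · exact (hprop a ih).1
        · exact (hprop a ih).2
    have hPP : P' = P := pm_eq_of_partner_eq hP' hP (fun v _ => hAg_all v)
    refine ⟨hPP, ?_⟩
    have h6 : P' + Q' = P' + Q := by rw [hPQ', hPP, hPQ]
    exact (add_right_inj _).1 h6
  have hbase : partner P' v0 = partner P v0 ∨ partner P' v0 = partner Q v0 := by
    have hP'le : P' ≤ C := by rw [← hPQ']; exact Multiset.le_add_right _ _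
    have h1 : s(v0, partner P' v0) ∈ C :=
      Multiset.mem_of_le hP'le (partner_spec' (hP'.2.1 v0 (Finset.mem_univ v0)))
    have hfilter : C.filter (fun f => v0 ∈ f) = {s(v0, partner P v0)} + {s(v0, partner Q v0)} := by
      rw [← hPQ, Multiset.filter_add,
        filter_partner (hP.2.1 v0 (Finset.mem_univ v0)),
        filter_partner (hQ.2.1 v0 (Finset.mem_univ v0))]
    have hmem : s(v0, partner P' v0) ∈ C.filter (fun f => v0 ∈ f) :=
      Multiset.mem_filter.2 ⟨h1, by simp⟩
    rw [hfilter] at hmem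
    rcases Multiset.mem_add.1 hmem with h | h <;> rw [Multiset.mem_singleton] at h
    · left
      rcases Sym2.eq_iff.1 h with ⟨_, h2⟩ | ⟨h1', h2⟩
      · exact h2
      · exact absurd h1'.symm (partner_ne hP.1 (hP.2.1 v0 (Finset.mem_univ v0)))
    · right
      rcases Sym2.eq_iff.1 h with ⟨_, h2⟩ | ⟨h1', h2⟩
      · exact h2
      · exact absurd h1'.symm (partner_ne hQ.1 (hQ.2.1 v0 (Finset.mem_univ v0)))
  rcases hbase with h | h
  · left; exact main P Q hP hQ hPQ h
  · right; exact main Q P hQ hP (by rw [add_comm]; exact hPQ) h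
lemma bnd_step (c k : ℕ) : bnd c (k+3) = (k+2-c) * bnd c (k+1) := rfl

open Nat in
lemma bnd_mul : ∀ m : ℕ, 1 ≤ m → bnd 1 (2*m) * bnd 2 (2*m) = (2*m-2)! := by
  intro m hm
  induction m with
  | zero => omega
  | succ m ih =>
    by_cases hm1 : m = 0
    · subst hm1; rfl
    · have hm' : 1 ≤ m := by omega
      have ihm := ih hm'
      have e1 : bnd 1 (2*(m+1)) = (2*m) * bnd 1 (2*m) := by
        rw [show 2*(m+1) = (2*m-1)+3 from by omega, bnd_step]
        rw [show 2*m-1+2-1 = 2*m from by omega, show 2*m-1+1 = 2*m from by omega]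
      have e2 : bnd 2 (2*(m+1)) = (2*m-1) * bnd 2 (2*m) := by
        rw [show 2*(m+1) = (2*m-1)+3 from by omega, bnd_step]
        rw [show 2*m-1+2-2 = 2*m-1 from by omega, show 2*m-1+1 = 2*m from by omega]
      have f1 : (2*(m+1)-2)! = (2*m) * (2*m-1) * (2*m-2)! := by
        rw [show 2*(m+1)-2 = (2*m-1)+1 from by omega, Nat.factorial_succ]
        rw [show 2*m-1+1 = 2*m from by omega]
        rw [show (2*m-1) = (2*m-2)+1 from by omega, Nat.factorial_succ]
        rw [show 2*m-2+1 = 2*m-1 from by omega]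
        ring
      rw [e1, e2, f1]
      calc 2*m * bnd 1 (2*m) * ((2*m-1) * bnd 2 (2*m))
          = 2*m * (2*m-1) * (bnd 1 (2*m) * bnd 2 (2*m)) := by ring
        _ = 2*m * (2*m-1) * (2*m-2)! := by rw [ihm]

lemma hamOn_univ_iff {E : Edges n} : HamOn Finset.univ E ↔ IsHam E := by
  constructor
  · rintro ⟨h1, h2, _, h4⟩
    exact ⟨h1, fun v => h2 v (Finset.mem_univ v),
      fun u v => h4 u (Finset.mem_univ u) v (Finset.mem_univ v)⟩
  · rintro ⟨h1, h2, h3⟩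
    exact ⟨h1, fun v _ => h2 v, fun v hv => absurd (Finset.mem_univ v) hv,
      fun u _ v _ => h3 u v⟩

open Nat in
theorem compatible_cycles_even_case (n : ℕ) (hn : 4 ≤ n) (hne : Even n)
    (G : Edges n) (hG : TwoRegular G) (hEv : EvenCycles G) :
    (n - 2)! / 2 ≤ Set.ncard {C : Edges n | Compatible G C} := by
  classical
  obtain ⟨m, hm⟩ := hne
  have hm2 : 2 ≤ m := by omega
  -- split G into two perfect matchings
  obtain ⟨M₁, M₂, hGsplit, hlM₁, hlM₂, hdeg2, _⟩ :=
    split_even (Multiset.card G) G le_rfl hG.1 (fun v => Or.inr (hG.2 v))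
      (fun v _ => hEv v)
  have hM₁ : PMOn Finset.univ M₁ :=
    ⟨hlM₁, fun v _ => (hdeg2 v (hG.2 v)).1, fun v hv => absurd (Finset.mem_univ v) hv⟩
  have hM₂ : PMOn Finset.univ M₂ :=
    ⟨hlM₂, fun v _ => (hdeg2 v (hG.2 v)).2, fun v hv => absurd (Finset.mem_univ v) hv⟩
  have hucard : (Finset.univ : Finset (Fin n)).card = n := by
    rw [Finset.card_univ, Fintype.card_fin]
  -- first-layer set
  set S₁ : Set (Edges n) :=
    {N : Edges n | PMOn Finset.univ N ∧ ∀ A ∈ [M₁], HamOn Finset.univ (A + N)} with hS₁def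
  have hS₁card : bnd 1 n ≤ S₁.ncard := by
    have := cnt (n := n) n n le_rfl Finset.univ [M₁] hucard
      (by intro A hA; rw [List.mem_singleton] at hA; subst hA; exact hM₁)
    exact this
  have hS₁fin : S₁.Finite := goodset_finite _ _
  set S₁fin : Finset (Edges n) := hS₁fin.toFinset with hS₁findef
  have hS₁fincard : S₁fin.card = S₁.ncard := (Set.ncard_eq_toFinset_card _ hS₁fin).symm
  -- second-layer sets
  set S₂ : Edges n → Set (Edges n) := fun N₁ =>
    {N₂ : Edges n | PMOn Finset.univ N₂ ∧ ∀ A ∈ [N₁, M₂], HamOn Finset.univ (A + N₂)} with hS₂def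
  set F : Edges n → Set (Edges n × Edges n) := fun N₁ => (Prod.mk N₁) '' (S₂ N₁) with hFdef
  have hFfin : ∀ N₁ ∈ S₁fin, (F N₁).Finite :=
    fun N₁ _ => Set.Finite.image _ (goodset_finite _ _)
  have hFdisj : ∀ w ∈ S₁fin, ∀ w' ∈ S₁fin, w ≠ w' → Disjoint (F w) (F w') := by
    intro w _ w' _ hne
    rw [Set.disjoint_left]
    rintro p ⟨x, _, rfl⟩ ⟨y, _, hy⟩
    exact hne (congrArg Prod.fst hy).symm
  have hFcard : ∀ N₁ ∈ S₁fin, bnd 2 n ≤ (F N₁).ncard := by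
    intro N₁ hN₁
    rw [Set.Finite.mem_toFinset] at hN₁
    have hN₁pm : PMOn Finset.univ N₁ := hN₁.1
    have hcnt := cnt (n := n) n n le_rfl Finset.univ [N₁, M₂] hucard ?_
    · rw [hFdef]
      simp only
      rw [Set.ncard_image_of_injective _ (fun a b h => (Prod.ext_iff.1 h).2)]
      exact hcnt
    · intro A hA
      rcases List.mem_cons.1 hA with rfl | hA
      · exact hN₁pm
      · rw [List.mem_singleton] at hA; subst hA; exact hM₂
  have hDU := ncard_biUnion_ge S₁fin F (bnd 2 n) hFfin hFdisj hFcard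
  set U : Set (Edges n × Edges n) := ⋃ w ∈ S₁fin, F w with hUdef
  have hUfin : U.Finite := Set.Finite.biUnion S₁fin.finite_toSet hFfin
  have hUcard : bnd 1 n * bnd 2 n ≤ U.ncard := by
    calc bnd 1 n * bnd 2 n ≤ S₁fin.card * bnd 2 n := by
          rw [hS₁fincard]; exact Nat.mul_le_mul_right _ hS₁card
      _ ≤ U.ncard := hDU
  -- properties of elements of U
  have hUprop : ∀ p ∈ U, PMOn Finset.univ p.1 ∧ PMOn Finset.univ p.2 ∧
      HamOn Finset.univ (p.1 + p.2) ∧ HamOn Finset.univ (M₁ + p.1) ∧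
      HamOn Finset.univ (M₂ + p.2) := by
    rintro p hp
    rw [hUdef, Set.mem_iUnion₂] at hp
    obtain ⟨N₁, hN₁, hp⟩ := hp
    rw [Set.Finite.mem_toFinset] at hN₁
    obtain ⟨N₂, hN₂, rfl⟩ := hp
    refine ⟨hN₁.1, hN₂.1, ?_, ?_, ?_⟩
    · exact hN₂.2 N₁ List.mem_cons_self
    · exact hN₁.2 M₁ (List.mem_singleton_self _)
    · exact hN₂.2 M₂ (by simp)
  -- map to compatible cycles
  set g : Edges n × Edges n → Edges n := fun p => p.1 + p.2 with hgdef
  set Ufin : Finset (Edges n × Edges n) := hUfin.toFinset with hUfindef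
  have hUfincard : Ufin.card = U.ncard := (Set.ncard_eq_toFinset_card _ hUfin).symm
  have hCfin : {C : Edges n | Compatible G C}.Finite := by
    apply Set.Finite.subset (finite_card_le (n := n) n)
    intro C hC
    have h2 := hC.1
    have hs := handshake h2.1
    have hsum : ∑ v : Fin n, edeg C v = n * 2 := by
      rw [Finset.sum_congr rfl (fun v _ => h2.2.1 v)]
      simp [Finset.card_univ]
    simp only [Set.mem_setOf_eq]
    omega
  have himg : ∀ p ∈ Ufin, g p ∈ hCfin.toFinset := by
    intro p hp
    rw [Set.Finite.mem_toFinset] at hp ⊢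
    obtain ⟨h1, h2, h3, h4, h5⟩ := hUprop p hp
    refine ⟨hamOn_univ_iff.1 h3, M₁ + p.1, M₂ + p.2, hamOn_univ_iff.1 h4,
      hamOn_univ_iff.1 h5, ?_⟩
    rw [hGsplit, hgdef]
    abel
  have hfiber : ∀ C ∈ Ufin.image g, (Ufin.filter (fun p => g p = C)).card ≤ 2 := by
    intro C hC
    set flt := Ufin.filter (fun p => g p = C) with hflt
    rcases Finset.eq_empty_or_nonempty flt with h | ⟨a, ha⟩
    · rw [h]; simp
    · have haU : a ∈ Ufin := (Finset.mem_filter.1 ha).1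
      have haC : a.1 + a.2 = C := (Finset.mem_filter.1 ha).2
      rw [Set.Finite.mem_toFinset] at haU
      obtain ⟨ha1, ha2, ha3, _, _⟩ := hUprop a haU
      have hCham : HamOn Finset.univ C := by rwa [haC] at ha3
      have hsub : flt ⊆ {a, (a.2, a.1)} := by
        intro p hp
        have hpU : p ∈ Ufin := (Finset.mem_filter.1 hp).1
        have hpC : p.1 + p.2 = C := (Finset.mem_filter.1 hp).2
        rw [Set.Finite.mem_toFinset] at hpU
        obtain ⟨hp1, hp2, _, _, _⟩ := hUprop p hpU
        rcases ham_split_pairs hn hCham ha1 ha2 hp1 hp2 haC hpC with ⟨e1, e2⟩ | ⟨e1, e2⟩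
        · have : p = a := Prod.ext e1 e2
          simp [this]
        · have : p = (a.2, a.1) := Prod.ext e1 e2
          simp [this]
      calc flt.card ≤ ({a, (a.2, a.1)} : Finset (Edges n × Edges n)).card :=
            Finset.card_le_card hsub
        _ ≤ 2 := by
            apply le_trans (Finset.card_insert_le _ _)
            simp
  have hmain : Ufin.card ≤ 2 * (Ufin.image g).card :=
    Finset.card_le_mul_card_image _ _ hfiber
  have himgcard : (Ufin.image g).card ≤ Set.ncard {C : Edges n | Compatible G C} := by
    rw [Set.ncard_eq_toFinset_card _ hCfin]
    exact Finset.card_le_card (fun C hC => by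
      obtain ⟨p, hp, rfl⟩ := Finset.mem_image.1 hC
      have := himg p hp
      rwa [Set.Finite.mem_toFinset] at this ⊢
      )
  -- numeric conclusion
  have hfact : (n - 2)! ≤ 2 * Set.ncard {C : Edges n | Compatible G C} := by
    have h1 : (n-2)! = bnd 1 n * bnd 2 n := by
      have := bnd_mul m (by omega)
      rw [show 2*m = n from by omega] at this
      rw [this]
    calc (n-2)! = bnd 1 n * bnd 2 n := h1
      _ ≤ U.ncard := hUcard
      _ = Ufin.card := hUfincard.symm
      _ ≤ 2 * (Ufin.image g).card := hmain
      _ ≤ 2 * Set.ncard {C : Edges n | Compatible G C} := by omega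
  calc (n-2)! / 2 ≤ (2 * Set.ncard {C : Edges n | Compatible G C}) / 2 :=
        Nat.div_le_div_right hfact
    _ = Set.ncard {C : Edges n | Compatible G C} := Nat.mul_div_cancel_left _ (by norm_num)
end partner
end

section
/- Let G be a 2-regular loopless multigraph on n vertices with k cycles of odd length (and possibly other even cycles), n − k even. If C' is a compatible Hamiltonian cycle for the multigraph G' obtained from G by contracting one edge incident to a chosen vertex in each odd cycle, then C' can be extended to a compatible Hamiltonian cycle for G; in particular, G has at least one compatible cycle. -/
/-- 2-regular on the vertex set `V`, with no edges touching vertices outside `V`. -/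
def TwoRegularOn {n : ℕ} (V : Finset (Fin n)) (E : Edges n) : Prop :=
  Loopless E ∧ (∀ v ∈ V, edeg E v = 2) ∧ ∀ v ∉ V, edeg E v = 0

/-- A Hamiltonian cycle on the vertex set `V`. -/
def IsHamOn {n : ℕ} (V : Finset (Fin n)) (E : Edges n) : Prop :=
  TwoRegularOn V E ∧ ∀ u ∈ V, ∀ w ∈ V, Relation.ReflTransGen (EAdj E) u w

/-- A compatible cycle for `G`, relative to the vertex set `V`. -/
def CompatibleOn {n : ℕ} (V : Finset (Fin n)) (G C : Edges n) : Prop :=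
  IsHamOn V C ∧ ∃ C₁ C₂ : Edges n, IsHamOn V C₁ ∧ IsHamOn V C₂ ∧ G + C = C₁ + C₂

/-- `E` is obtained from `F` by inserting the new vertex `v` into some edge `ab` of `F`
(equivalently, `F` is obtained from `E` by contracting an edge incident to `v`). -/
def InsertV {n : ℕ} (v : Fin n) (E F : Edges n) : Prop :=
  ∃ a b : Fin n, a ≠ v ∧ b ≠ v ∧ s(a, b) ∈ F ∧
    E = (F.erase s(a, b)) + {s(a, v), s(v, b)}

/-- `InsertList l E F` : `E` is obtained from `F` by successively inserting
the vertices in the list `l`, each into some edge. -/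
def InsertList {n : ℕ} : List (Fin n) → Edges n → Edges n → Prop
  | [] => fun E F => E = F
  | v :: l => fun E F => ∃ E' : Edges n, InsertV v E E' ∧ InsertList l E' F


namespace CCE

lemma edeg_add {n} (A B : Edges n) (v) : edeg (A + B) v = edeg A v + edeg B v := by
  simp [edeg, Multiset.filter_add]

lemma edeg_singleton {n} (e : Sym2 (Fin n)) (v) :
    edeg ({e} : Edges n) v = if v ∈ e then 1 else 0 := by
  simp [edeg, Multiset.filter_singleton]
  split <;> simp

lemma edeg_pair {n} (x y : Sym2 (Fin n)) (u) :
    edeg ({x, y} : Edges n) u = (if u ∈ x then 1 else 0) + (if u ∈ y then 1 else 0) := by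
  have : ({x, y} : Edges n) = {x} + {y} := by
    rw [Multiset.singleton_add]; rfl
  rw [this, edeg_add, edeg_singleton, edeg_singleton]

lemma edeg_pos {n} {E : Edges n} {e : Sym2 (Fin n)} {v : Fin n}
    (he : e ∈ E) (hv : v ∈ e) : 0 < edeg E v :=
  Multiset.card_pos_iff_exists_mem.mpr ⟨e, Multiset.mem_filter.mpr ⟨he, hv⟩⟩

lemma not_mem_of_edeg_zero {n} {E : Edges n} {e : Sym2 (Fin n)} {v : Fin n}
    (h : edeg E v = 0) (he : e ∈ E) : v ∉ e := fun hv => by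
  have := edeg_pos he hv; omega

lemma edeg_erase {n} (E : Edges n) {e : Sym2 (Fin n)} (he : e ∈ E) (u : Fin n) :
    edeg E u = edeg (E.erase e) u + (if u ∈ e then 1 else 0) := by
  conv_lhs => rw [show E = {e} + E.erase e by
    rw [Multiset.singleton_add, Multiset.cons_erase he]]
  rw [edeg_add, edeg_singleton, add_comm]

end CCE

namespace CCE

lemma lift_rtg {α} {r s : α → α → Prop} (h : ∀ x y, r x y → Relation.ReflTransGen s x y)
    {u w : α} (huw : Relation.ReflTransGen r u w) : Relation.ReflTransGen s u w := by
  induction huw with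
  | refl => exact .refl
  | tail _ h2 ih => exact ih.trans (h _ _ h2)

section subdiv

variable {n : ℕ} {V : Finset (Fin n)} {E : Edges n} {a b v : Fin n}

lemma mem_V_of_mem_edge {u : Fin n} {e : Sym2 (Fin n)} (hE : TwoRegularOn V E)
    (he : e ∈ E) (hu : u ∈ e) : u ∈ V := by
  by_contra h
  exact not_mem_of_edeg_zero (hE.2.2 u h) he hu

lemma tworeg_subdiv (hv : v ∉ V) (hE : TwoRegularOn V E) (hab : s(a,b) ∈ E) :
    TwoRegularOn (insert v V) (E.erase s(a,b) + {s(a,v), s(v,b)}) := by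
  have haV : a ∈ V := mem_V_of_mem_edge hE hab (Sym2.mem_mk_left a b)
  have hbV : b ∈ V := mem_V_of_mem_edge hE hab (Sym2.mem_mk_right a b)
  have hav : a ≠ v := fun h => hv (h ▸ haV)
  have hbv : b ≠ v := fun h => hv (h ▸ hbV)
  have hanb : a ≠ b := fun h => hE.1 _ hab (by simp [h, Sym2.isDiag_iff_proj_eq])
  have key : ∀ u : Fin n, edeg (E.erase s(a,b) + {s(a,v), s(v,b)}) u
      + (if u ∈ s(a,b) then 1 else 0)
      = edeg E u + (if u ∈ s(a,v) then 1 else 0) + (if u ∈ s(v,b) then 1 else 0) := by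
    intro u
    rw [edeg_add, edeg_pair, edeg_erase E hab u]
    ring
  refine ⟨?_, ?_, ?_⟩
  · intro e he
    rcases Multiset.mem_add.mp he with h | h
    · exact hE.1 _ (Multiset.mem_of_mem_erase h)
    · rcases Multiset.mem_cons.mp h with h | h
      · subst h; simp [Sym2.isDiag_iff_proj_eq, hav]
      · have : e = s(v,b) := by simpa using h
        subst this; simp [Sym2.isDiag_iff_proj_eq, hbv.symm]
  · intro u hu
    have hk := key u
    rcases Finset.mem_insert.mp hu with h | h
    · subst h
      have h0 : edeg E u = 0 := hE.2.2 u hv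
      simp only [Sym2.mem_iff] at hk
      rw [if_neg (by tauto), if_pos (by tauto), if_pos (by tauto), h0] at hk
      omega
    · have h2 : edeg E u = 2 := hE.2.1 u h
      have huv : u ≠ v := fun hh => hv (hh ▸ h)
      simp only [Sym2.mem_iff] at hk
      by_cases hua : u = a
      · subst hua
        rw [if_pos (by tauto), if_pos (by tauto), if_neg (by tauto), h2] at hk
        omega
      · by_cases hub : u = b
        · subst hub
          rw [if_pos (by tauto), if_neg (by tauto), if_pos (by tauto), h2] at hk
          omega
        · rw [if_neg (by tauto), if_neg (by tauto), if_neg (by tauto), h2] at hk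
          omega
  · intro u hu
    have huV : u ∉ V := fun h => hu (Finset.mem_insert_of_mem h)
    have huv : u ≠ v := fun h => hu (h ▸ Finset.mem_insert_self v V)
    have hua : u ≠ a := fun h => huV (h ▸ haV)
    have hub : u ≠ b := fun h => huV (h ▸ hbV)
    have h0 : edeg E u = 0 := hE.2.2 u huV
    have hk := key u
    simp only [Sym2.mem_iff] at hk
    rw [if_neg (by tauto), if_neg (by tauto), if_neg (by tauto), h0] at hk
    omega

lemma ham_subdiv (hv : v ∉ V) (hE : IsHamOn V E) (hab : s(a,b) ∈ E) :
    IsHamOn (insert v V) (E.erase s(a,b) + {s(a,v), s(v,b)}) := by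
  obtain ⟨hreg, hconn⟩ := hE
  have haV : a ∈ V := mem_V_of_mem_edge hreg hab (Sym2.mem_mk_left a b)
  have hbV : b ∈ V := mem_V_of_mem_edge hreg hab (Sym2.mem_mk_right a b)
  have hav : a ≠ v := fun h => hv (h ▸ haV)
  have hbv : b ≠ v := fun h => hv (h ▸ hbV)
  set C := E.erase s(a,b) + {s(a,v), s(v,b)} with hC
  have hmemav : s(a,v) ∈ C := Multiset.mem_add.mpr (Or.inr (by simp))
  have hmemvb : s(v,b) ∈ C := Multiset.mem_add.mpr (Or.inr (by simp))
  have step : ∀ x y, EAdj E x y → Relation.ReflTransGen (EAdj C) x y := by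
    intro x y ⟨hxy, hmem⟩
    by_cases h : s(x,y) ∈ E.erase s(a,b)
    · exact Relation.ReflTransGen.single ⟨hxy, Multiset.mem_add.mpr (Or.inl h)⟩
    · have hxyab : s(x,y) = s(a,b) := by
        by_contra hne
        exact h ((Multiset.mem_erase_of_ne hne).mpr hmem)
      rcases Sym2.eq_iff.mp hxyab with ⟨hxa, hyb⟩ | ⟨hxb, hya⟩
      · subst hxa; subst hyb
        exact (Relation.ReflTransGen.single ⟨hav, hmemav⟩).tail
          ⟨fun h => hbv h.symm, hmemvb⟩
      · subst hxb; subst hya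
        exact (Relation.ReflTransGen.single ⟨hbv, by rw [Sym2.eq_swap]; exact hmemvb⟩).tail
          ⟨fun h => hav h.symm, by rw [Sym2.eq_swap]; exact hmemav⟩
  have conn : ∀ u ∈ V, ∀ w ∈ V, Relation.ReflTransGen (EAdj C) u w := by
    intro u hu w hw
    exact lift_rtg step (hconn u hu w hw)
  have hva : Relation.ReflTransGen (EAdj C) v a :=
    Relation.ReflTransGen.single ⟨fun h => hav h.symm, by rwa [Sym2.eq_swap]⟩
  have hav' : Relation.ReflTransGen (EAdj C) a v :=
    Relation.ReflTransGen.single ⟨hav, hmemav⟩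
  refine ⟨tworeg_subdiv hv hreg hab, ?_⟩
  intro u hu w hw
  rcases Finset.mem_insert.mp hu with rfl | hu2
  · rcases Finset.mem_insert.mp hw with rfl | hw2
    · exact .refl
    · exact hva.trans (conn a haV w hw2)
  · rcases Finset.mem_insert.mp hw with rfl | hw2
    · exact (conn u hu2 a haV).trans hav'
    · exact conn u hu2 w hw2

end subdiv
end CCE

namespace CCE

lemma degenerate {n : ℕ} {V : Finset (Fin n)} {G' C' C₁ C₂ : Edges n}
    (hG' : TwoRegularOn V G') (hC' : IsHamOn V C') (h1 : IsHamOn V C₁)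
    (heq : G' + C' = C₁ + C₂) (hnone : ∀ e ∈ C₂, e ∉ C') : C₂ = G' ∧ C₁ = C' := by
  have hle : C₂ ≤ G' := by
    rw [Multiset.le_iff_count]
    intro e
    by_cases he : e ∈ C₂
    · have hcount : Multiset.count e C' = 0 := Multiset.count_eq_zero.mpr (hnone e he)
      have := congrArg (Multiset.count e) heq
      rw [Multiset.count_add, Multiset.count_add, hcount] at this
      omega
    · simp [Multiset.count_eq_zero.mpr he]
  obtain ⟨D, hD⟩ := Multiset.le_iff_exists_add.mp hle
  have hC1 : C₁ = D + C' := by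
    have h' : C₂ + (D + C') = C₂ + C₁ := by
      rw [← add_assoc, ← hD, heq, add_comm]
    exact (add_left_cancel h').symm
  have hD0 : D = 0 := by
    apply Multiset.eq_zero_of_forall_notMem
    intro e he
    have hx : e.out.1 ∈ e := Sym2.out_fst_mem e
    have hpos : 0 < edeg D e.out.1 := edeg_pos he hx
    by_cases hxV : e.out.1 ∈ V
    · have := h1.1.2.1 e.out.1 hxV
      have h2 := hC'.1.2.1 e.out.1 hxV
      rw [hC1, edeg_add, h2] at this
      omega
    · have := hG'.2.2 e.out.1 hxV
      rw [hD, edeg_add] at this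
      omega
  constructor
  · rw [hD, hD0, add_zero]
  · rw [hC1, hD0, zero_add]

end CCE

namespace CCE

lemma step_core {n : ℕ} {V : Finset (Fin n)} {v : Fin n} (hv : v ∉ V)
    {G' C' C₁ C₂ : Edges n} {a b c d : Fin n}
    (hC' : IsHamOn V C') (h1 : IsHamOn V C₁) (h2 : IsHamOn V C₂)
    (heq : G' + C' = C₁ + C₂) (habG : s(a,b) ∈ G') (hab1 : s(a,b) ∈ C₁)
    (hcd2 : s(c,d) ∈ C₂) (hcdC : s(c,d) ∈ C') :
    ∃ C, InsertV v C C' ∧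
      CompatibleOn (insert v V) (G'.erase s(a,b) + {s(a,v), s(v,b)}) C := by
  have hcV : c ∈ V := mem_V_of_mem_edge hC'.1 hcdC (Sym2.mem_mk_left c d)
  have hdV : d ∈ V := mem_V_of_mem_edge hC'.1 hcdC (Sym2.mem_mk_right c d)
  have hcv : c ≠ v := fun h => hv (h ▸ hcV)
  have hdv : d ≠ v := fun h => hv (h ▸ hdV)
  refine ⟨C'.erase s(c,d) + {s(c,v), s(v,d)}, ⟨c, d, hcv, hdv, hcdC, rfl⟩, ?_⟩
  refine ⟨ham_subdiv hv hC' hcdC,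
    C₁.erase s(a,b) + {s(a,v), s(v,b)}, C₂.erase s(c,d) + {s(c,v), s(v,d)},
    ham_subdiv hv h1 hab1, ham_subdiv hv h2 hcd2, ?_⟩
  have key : G'.erase s(a,b) + C'.erase s(c,d) = C₁.erase s(a,b) + C₂.erase s(c,d) := by
    have e1 : G'.erase s(a,b) + C' = C₁.erase s(a,b) + C₂ := by
      rw [← Multiset.erase_add_left_pos _ habG, heq, Multiset.erase_add_left_pos _ hab1]
    calc G'.erase s(a,b) + C'.erase s(c,d)
        = (G'.erase s(a,b) + C').erase s(c,d) := by
          rw [Multiset.erase_add_right_pos _ hcdC]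
      _ = (C₁.erase s(a,b) + C₂).erase s(c,d) := by rw [e1]
      _ = C₁.erase s(a,b) + C₂.erase s(c,d) := Multiset.erase_add_right_pos _ hcd2
  calc G'.erase s(a,b) + {s(a,v), s(v,b)} + (C'.erase s(c,d) + {s(c,v), s(v,d)})
      = (G'.erase s(a,b) + C'.erase s(c,d)) + ({s(a,v), s(v,b)} + {s(c,v), s(v,d)}) := by
        ac_rfl
    _ = (C₁.erase s(a,b) + C₂.erase s(c,d)) + ({s(a,v), s(v,b)} + {s(c,v), s(v,d)}) := by
        rw [key]
    _ = C₁.erase s(a,b) + {s(a,v), s(v,b)} + (C₂.erase s(c,d) + {s(c,v), s(v,d)}) := by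
        ac_rfl

end CCE

namespace CCE

lemma exists_C'_mem {n : ℕ} {V : Finset (Fin n)} {C' : Edges n} {a : Fin n}
    (hC' : IsHamOn V C') (ha : a ∈ V) : ∃ e, e ∈ C' := by
  have h2 : edeg C' a = 2 := hC'.1.2.1 a ha
  have : 0 < Multiset.card (C'.filter (fun e => a ∈ e)) := by rw [← edeg]; omega
  obtain ⟨e, he⟩ := Multiset.card_pos_iff_exists_mem.mp this
  exact ⟨e, (Multiset.mem_filter.mp he).1⟩

lemma step {n : ℕ} {V : Finset (Fin n)} {v : Fin n} (hv : v ∉ V)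
    {G G' C' : Edges n} (hG' : TwoRegularOn V G')
    (hins : InsertV v G G') (hC : CompatibleOn V G' C') :
    ∃ C, InsertV v C C' ∧ CompatibleOn (insert v V) G C := by
  obtain ⟨a, b, hav, hbv, habG, rfl⟩ := hins
  obtain ⟨hHamC', C₁, C₂, h1, h2, heq⟩ := hC
  have haV : a ∈ V := mem_V_of_mem_edge hG' habG (Sym2.mem_mk_left a b)
  have hmem12 : s(a,b) ∈ C₁ + C₂ := heq ▸ Multiset.mem_add.mpr (Or.inl habG)
  -- helper: given a good configuration, finish
  have finish : ∀ (D₁ D₂ : Edges n), IsHamOn V D₁ → IsHamOn V D₂ →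
      G' + C' = D₁ + D₂ → s(a,b) ∈ D₁ → (∃ e, e ∈ D₂ ∧ e ∈ C') →
      ∃ C, InsertV v C C' ∧
        CompatibleOn (insert v V) (G'.erase s(a,b) + {s(a,v), s(v,b)}) C := by
    rintro D₁ D₂ hD1 hD2 heq' hab1 ⟨e, he2, heC⟩
    induction e using Sym2.ind with
    | _ c d => exact step_core hv hHamC' hD1 hD2 heq' habG hab1 he2 heC
  rcases Multiset.mem_add.mp hmem12 with hab1 | hab2
  · by_cases hex : ∃ e, e ∈ C₂ ∧ e ∈ C'
    · exact finish C₁ C₂ h1 h2 heq hab1 hex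
    · push_neg at hex
      obtain ⟨hC2G, hC1C⟩ := degenerate hG' hHamC' h1 heq hex
      obtain ⟨e, he⟩ := exists_C'_mem hHamC' haV
      exact finish C₂ C₁ h2 h1 (by rw [heq, add_comm]) (hC2G ▸ habG) ⟨e, hC1C ▸ he, he⟩
  · by_cases hex : ∃ e, e ∈ C₁ ∧ e ∈ C'
    · exact finish C₂ C₁ h2 h1 (by rw [heq, add_comm]) hab2 hex
    · push_neg at hex
      obtain ⟨hC1G, hC2C⟩ := degenerate hG' hHamC' h2 (by rw [heq, add_comm]) hex
      obtain ⟨e, he⟩ := exists_C'_mem hHamC' haV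
      exact finish C₁ C₂ h1 h2 heq (hC1G ▸ habG) ⟨e, hC2C ▸ he, he⟩

end CCE

namespace CCE

lemma tworeg_insertV {n : ℕ} {V : Finset (Fin n)} {v : Fin n} {E F : Edges n}
    (hv : v ∉ V) (hF : TwoRegularOn V F) (h : InsertV v E F) :
    TwoRegularOn (insert v V) E := by
  obtain ⟨a, b, _, _, habF, rfl⟩ := h
  exact tworeg_subdiv hv hF habF

lemma tworeg_insertList {n : ℕ} (l : List (Fin n)) :
    ∀ (V : Finset (Fin n)) (E F : Edges n), l.Nodup → (∀ x ∈ l, x ∉ V) →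
    TwoRegularOn V F → InsertList l E F → TwoRegularOn (V ∪ l.toFinset) E := by
  induction l with
  | nil => intro V E F _ _ hF hIL; cases hIL; simpa using hF
  | cons w t iht =>
    intro V E F hnd hnotV hF hIL
    obtain ⟨E₂, hIV₂, hIL₂⟩ := hIL
    have hreg := iht V E₂ F (List.nodup_cons.mp hnd).2
      (fun x hx => hnotV x (List.mem_cons_of_mem w hx)) hF hIL₂
    have hw : w ∉ V ∪ t.toFinset := by
      simp only [Finset.mem_union, List.mem_toFinset]
      push_neg
      exact ⟨hnotV w (List.mem_cons_self), (List.nodup_cons.mp hnd).1⟩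
    have h2 := tworeg_insertV hw hreg hIV₂
    have he : insert w (V ∪ t.toFinset) = V ∪ (w :: t).toFinset := by
      simp [Finset.union_insert]
    rwa [he] at h2

lemma main_ind {n : ℕ} (l : List (Fin n)) :
    ∀ (V : Finset (Fin n)) (G F C' : Edges n), l.Nodup → (∀ x ∈ l, x ∉ V) →
    TwoRegularOn V F → InsertList l G F → CompatibleOn V F C' →
    ∃ C l', l'.Nodup ∧ l'.toFinset = l.toFinset ∧ InsertList l' C C' ∧
      CompatibleOn (V ∪ l.toFinset) G C := by
  induction l with
  | nil =>
    intro V G F C' _ _ _ hins hC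
    cases hins
    exact ⟨C', [], by simp, by simp, rfl, by simpa using hC⟩
  | cons v l ih =>
    intro V G F C' hnd hnotV hF hins hC
    obtain ⟨E', hIV, hIL⟩ := hins
    obtain ⟨C'', l'', hnd'', hfin'', hIL'', hC''⟩ :=
      ih V E' F C' (List.nodup_cons.mp hnd).2 (fun x hx => hnotV x (List.mem_cons_of_mem v hx))
        hF hIL hC
    have hvV : v ∉ V ∪ l.toFinset := by
      simp only [Finset.mem_union, List.mem_toFinset]
      push_neg
      exact ⟨hnotV v (List.mem_cons_self), (List.nodup_cons.mp hnd).1⟩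
    have hE'reg : TwoRegularOn (V ∪ l.toFinset) E' :=
      tworeg_insertList l V E' F (List.nodup_cons.mp hnd).2
        (fun x hx => hnotV x (List.mem_cons_of_mem v hx)) hF hIL
    obtain ⟨C, hICV, hCC⟩ := step hvV hE'reg hIV hC''
    refine ⟨C, v :: l'', ?_, ?_, ⟨C'', hICV, hIL''⟩, ?_⟩
    · rw [List.nodup_cons]
      refine ⟨fun h => (List.nodup_cons.mp hnd).1 ?_, hnd''⟩
      rw [← List.mem_toFinset, hfin'', List.mem_toFinset] at h
      exact h
    · simp [hfin'']
    · have : insert v (V ∪ l.toFinset) = V ∪ (v :: l).toFinset := by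
        simp [Finset.union_insert]
      rwa [this] at hCC

end CCE

namespace CCE

lemma isHam_of_univ {n : ℕ} {E : Edges n} (h : IsHamOn Finset.univ E) : IsHam E :=
  ⟨h.1.1, fun v => h.1.2.1 v (Finset.mem_univ v),
    fun u w => h.2 u (Finset.mem_univ u) w (Finset.mem_univ w)⟩

lemma compatible_of_univ {n : ℕ} {G C : Edges n}
    (h : CompatibleOn Finset.univ G C) : Compatible G C := by
  obtain ⟨hHam, C₁, C₂, h1, h2, heq⟩ := h
  exact ⟨isHam_of_univ hHam, C₁, C₂, isHam_of_univ h1, isHam_of_univ h2, heq⟩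

end CCE

open Nat in
theorem compatible_cycle_extends_through_contraction (n k : ℕ)
    (G G' : Edges n) (S : Finset (Fin n)) (hS : S.card = k) (hnk : Even (n - k))
    (hG : TwoRegular G)
    (hG' : TwoRegularOn Sᶜ G')
    (hEv : ∀ v ∉ S, Even (Set.ncard {u | Relation.ReflTransGen (EAdj G') v u}))
    (l : List (Fin n)) (hl : l.Nodup) (hlS : l.toFinset = S)
    (hins : InsertList l G G')
    (C' : Edges n) (hC' : CompatibleOn Sᶜ G' C') :
    (∃ (C : Edges n) (l' : List (Fin n)), l'.Nodup ∧ l'.toFinset = S ∧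
        InsertList l' C C' ∧ Compatible G C) ∧
      ∃ C : Edges n, Compatible G C := by
  have hnotV : ∀ x ∈ l, x ∉ Sᶜ := by
    intro x hx
    rw [Finset.mem_compl, not_not, ← hlS]
    exact List.mem_toFinset.mpr hx
  obtain ⟨C, l', hnd', hfin', hiL', hcomp⟩ :=
    CCE.main_ind l Sᶜ G G' C' hl hnotV hG' hins hC'
  have huniv : Sᶜ ∪ l.toFinset = Finset.univ := by
    rw [hlS]
    ext x
    simp [Finset.mem_compl, em]
    tauto
  rw [huniv] at hcomp
  have hfinal : Compatible G C := CCE.compatible_of_univ hcomp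
  exact ⟨⟨C, l', hnd', by rw [hfin', hlS], hiL', hfinal⟩, ⟨C, hfinal⟩⟩
end
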